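/- arXiv:2012.11752 — 5 statements merged into one kernel-verified Lean document; each statement's English description precedes it below -/
import Mathlib

section
/- Let m ≥ 3 and let 𝟙_v denote the indicator function of a vertex v (𝟙_v(v) = 1 and 𝟙_v(u) = 0 for u ≠ v). For all vertices v and w of C_m^N, if ((A_- ∘ A_+ − A_+ ∘ A_-) 𝟙_v)(w) ≠ 0, then d_k(w) = d_k(v) for every coordinate k ∈ Fin N; that is, the commutator C = A_-A_+ − A_+A_- is supported on pairs of vertices having equal level vectors. -/
open Finset

/-- The standard generator `e_k` of `(ZMod m)^N`: equal to `1` in coordinate `k`,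
`0` elsewhere. -/
def eV (N m : ℕ) (k : Fin N) : Fin N → ZMod m :=
  fun j => if j = k then 1 else 0

/-- Adjacency in the Cayley graph `C_m^N`: `v ∼ w` iff `w = v + e_k` or `w = v - e_k`
for some coordinate `k`. -/
def adj (N m : ℕ) (v w : Fin N → ZMod m) : Prop :=
  ∃ k : Fin N, w = v + eV N m k ∨ w = v - eV N m k

/-- The `k`-th level of a vertex: `d_k(v) = min((v k).val, m - (v k).val)`. -/
def lev (N m : ℕ) (v : Fin N → ZMod m) (k : Fin N) : ℕ :=
  min ((v k).val) (m - (v k).val)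

/-- Path distance of a vertex to the origin: `d(v) = Σ_k d_k(v)`. -/
def distO (N m : ℕ) (v : Fin N → ZMod m) : ℕ :=
  ∑ k : Fin N, lev N m v k

open Classical in
/-- Adjacency operator: `(A f)(v) = Σ_{w ∼ v} f(w)`. -/
noncomputable def Aop (N m : ℕ) [NeZero m] (f : (Fin N → ZMod m) → ℂ) :
    (Fin N → ZMod m) → ℂ :=
  fun v => ∑ w : Fin N → ZMod m, if adj N m v w then f w else 0

open Classical in
/-- Outer adjacency: `(A₊ f)(v) = Σ_{w ∼ v, d(w) < d(v)} f(w)`. -/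
noncomputable def Aplus (N m : ℕ) [NeZero m] (f : (Fin N → ZMod m) → ℂ) :
    (Fin N → ZMod m) → ℂ :=
  fun v => ∑ w : Fin N → ZMod m,
    if adj N m v w ∧ distO N m w < distO N m v then f w else 0

open Classical in
/-- Inner adjacency: `(A₋ f)(v) = Σ_{w ∼ v, d(w) > d(v)} f(w)`. -/
noncomputable def Aminus (N m : ℕ) [NeZero m] (f : (Fin N → ZMod m) → ℂ) :
    (Fin N → ZMod m) → ℂ :=
  fun v => ∑ w : Fin N → ZMod m,
    if adj N m v w ∧ distO N m v < distO N m w then f w else 0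

open Classical in
/-- Neutral adjacency: `(A₀ f)(v) = Σ_{w ∼ v, d(w) = d(v)} f(w)`. -/
noncomputable def Azero (N m : ℕ) [NeZero m] (f : (Fin N → ZMod m) → ℂ) :
    (Fin N → ZMod m) → ℂ :=
  fun v => ∑ w : Fin N → ZMod m,
    if adj N m v w ∧ distO N m w = distO N m v then f w else 0

/-- The `k`-reflection `ṽ_k` of a vertex: negate the `k`-th coordinate. -/
def reflV (N m : ℕ) (k : Fin N) (v : Fin N → ZMod m) : Fin N → ZMod m :=
  Function.update v k (-(v k))

/-- Level-one reflection sum: `(R₁ f)(v) = Σ_{k : d_k(v) = 1} f(ṽ_k)`. -/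
noncomputable def R1 (N m : ℕ) (f : (Fin N → ZMod m) → ℂ) :
    (Fin N → ZMod m) → ℂ :=
  fun v => ∑ k ∈ Finset.univ.filter (fun k => lev N m v k = 1), f (reflV N m k v)

/-- Number of coordinates of `v` at level `ℓ`. -/
def cardLev (N m : ℕ) (v : Fin N → ZMod m) (ℓ : ℕ) : ℕ :=
  (Finset.univ.filter (fun k => lev N m v k = ℓ)).card

open Classical in
/-- Indicator function of a single vertex. -/
noncomputable def indV (N m : ℕ) (v : Fin N → ZMod m) : (Fin N → ZMod m) → ℂ :=
  fun u => if u = v then 1 else 0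
section Aux

variable {N m : ℕ}

lemma levStepLe [NeZero m] (hm : 3 ≤ m) (a b : ZMod m) (hab : b = a + 1 ∨ b = a - 1) :
    min b.val (m - b.val) ≤ min a.val (m - a.val) + 1 := by
  have ha : a.val < m := ZMod.val_lt a
  have h1 : (1:ZMod m).val = 1 := by rw [ZMod.val_one_eq_one_mod]; exact Nat.mod_eq_of_lt (by omega)
  rcases hab with hb | hb
  · have hv : b.val = (a.val+1) % m := by rw [hb, ZMod.val_add, h1]
    rcases Nat.lt_or_ge (a.val+1) m with h'|h'
    · rw [Nat.mod_eq_of_lt h'] at hv; omega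
    · have he : a.val + 1 = m := by omega
      rw [he, Nat.mod_self] at hv; omega
  · have h10 : (1:ZMod m) ≠ 0 := by
      intro hc; rw [hc] at h1; simp at h1
    have hn : (-1 : ZMod m).val = m - 1 := by rw [ZMod.neg_val]; simp [h10, h1]
    have hv : b.val = (a.val + (m-1)) % m := by
      rw [hb, sub_eq_add_neg, ZMod.val_add, hn]
    rcases Nat.eq_zero_or_pos a.val with h0|h0
    · rw [h0] at hv; simp at hv
      omega
    · have : a.val + (m-1) = (a.val - 1) + m := by omega
      rw [this, Nat.add_mod_right, Nat.mod_eq_of_lt (by omega)] at hv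
      omega

lemma adjStep {x y : Fin N → ZMod m} (h : adj N m x y) :
    ∃ k, (∀ i, i ≠ k → y i = x i) ∧ (y k = x k + 1 ∨ y k = x k - 1) := by
  obtain ⟨k, hk | hk⟩ := h
  · exact ⟨k, fun i hi => by simp [hk, eV, hi], Or.inl (by simp [hk, eV])⟩
  · exact ⟨k, fun i hi => by simp [hk, eV, hi], Or.inr (by simp [hk, eV, sub_eq_add_neg])⟩

lemma stepAdj {x y : Fin N → ZMod m} (k : Fin N) (h1 : ∀ i, i ≠ k → y i = x i)
    (h2 : y k = x k + 1 ∨ y k = x k - 1) : adj N m x y := by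
  refine ⟨k, ?_⟩
  rcases h2 with h | h
  · left; funext i
    by_cases hi : i = k
    · subst hi; simpa [eV] using h
    · simp [eV, hi, h1 i hi]
  · right; funext i
    by_cases hi : i = k
    · subst hi; simpa [eV, sub_eq_add_neg] using h
    · simp [eV, hi, h1 i hi]

lemma stepFlip {a b : ZMod m} (h2 : b = a + 1 ∨ b = a - 1) :
    a = b + 1 ∨ a = b - 1 := by
  rcases h2 with h | h
  · right; rw [h]; ring
  · left; rw [h]; ring

lemma levCongr (x y : Fin N → ZMod m) (i : Fin N) (h : x i = y i) :
    lev N m x i = lev N m y i := by unfold lev; rw [h]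

lemma levBound [NeZero m] (hm : 3 ≤ m) {x y : Fin N → ZMod m} (k : Fin N)
    (h : y k = x k + 1 ∨ y k = x k - 1) :
    lev N m y k ≤ lev N m x k + 1 ∧ lev N m x k ≤ lev N m y k + 1 :=
  ⟨levStepLe hm (x k) (y k) h, levStepLe hm (y k) (x k) (stepFlip h)⟩

lemma distOKey (k : Fin N) (u v : Fin N → ZMod m)
    (h : ∀ i, i ≠ k → lev N m u i = lev N m v i) :
    distO N m u + lev N m v k = distO N m v + lev N m u k := by
  unfold distO
  rw [← Finset.sum_erase_add _ _ (Finset.mem_univ k),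
      ← Finset.sum_erase_add _ _ (Finset.mem_univ k)]
  have he : ∑ i ∈ Finset.univ.erase k, lev N m u i = ∑ i ∈ Finset.univ.erase k, lev N m v i :=
    Finset.sum_congr rfl fun i hi => h i (Finset.ne_of_mem_erase hi)
  omega

/-- Key structural lemma about common neighbors. -/
lemma keyLemma [NeZero m] (hm : 3 ≤ m) (v w u : Fin N → ZMod m)
    (h1 : adj N m w u) (h2 : adj N m u v)
    (hdir : (distO N m w < distO N m u ∧ distO N m v < distO N m u) ∨
            (distO N m u < distO N m w ∧ distO N m u < distO N m v)) :
    (∀ i, lev N m w i = lev N m v i) ∨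
      (adj N m w (v + w - u) ∧ adj N m (v + w - u) v ∧
        distO N m (v + w - u) + distO N m u = distO N m v + distO N m w) := by
  obtain ⟨j, hwj, hwj2⟩ := adjStep h1
  obtain ⟨k, hvk, hvk2⟩ := adjStep h2
  by_cases hkj : k = j
  · -- same coordinate: level vectors must agree
    subst hkj
    left
    have hoff : ∀ i, i ≠ k → lev N m w i = lev N m v i := by
      intro i hi
      exact levCongr w v i (by rw [← hwj i hi, hvk i hi])
    have E1 := distOKey k v u (fun i hi => levCongr v u i (hvk i hi))
    have E2 := distOKey k u w (fun i hi => levCongr u w i (hwj i hi))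
    have B1 := levBound hm (x := u) (y := v) k hvk2
    have B2 := levBound hm (x := w) (y := u) k hwj2
    intro i
    by_cases hi : i = k
    · subst hi
      rcases hdir with ⟨hd1, hd2⟩ | ⟨hd1, hd2⟩ <;> omega
    · exact hoff i hi
  · -- different coordinates: reflection partner works
    right
    have hjk : j ≠ k := fun hc => hkj hc.symm
    have hukwk : u k = w k := hwj k hkj
    have hvjuj : v j = u j := hvk j hjk
    have hφk : (v + w - u) k = v k := by
      simp only [Pi.sub_apply, Pi.add_apply, ← hukwk]
      ring
    have hφj : (v + w - u) j = w j := by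
      simp only [Pi.sub_apply, Pi.add_apply, hvjuj]
      ring
    have hφoff : ∀ i, i ≠ k → i ≠ j → (v + w - u) i = v i := by
      intro i hik hij
      simp only [Pi.sub_apply, Pi.add_apply, ← hwj i hij]
      ring
    have hwoff : ∀ i, i ≠ k → i ≠ j → w i = v i := by
      intro i hik hij
      rw [← hwj i hij, hvk i hik]
    have adj1 : adj N m w (v + w - u) := by
      apply stepAdj k
      · intro i hik
        by_cases hij : i = j
        · subst hij; rw [hφj]
        · rw [hφoff i hik hij, ← hwoff i hik hij]
      · rw [hφk, ← hukwk]
        exact hvk2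
    have adj2 : adj N m (v + w - u) v := by
      apply stepAdj j
      · intro i hij
        by_cases hik : i = k
        · subst hik; exact hφk.symm
        · exact (hφoff i hik hij).symm
      · rw [hφj, hvjuj]
        exact hwj2
    refine ⟨adj1, adj2, ?_⟩
    have E2 := distOKey j u w (fun i hi => levCongr u w i (hwj i hi))
    have E3 := distOKey j (v + w - u) v (fun i hi => by
      by_cases hik : i = k
      · exact levCongr (v+w-u) v i (by rw [hik]; exact hφk)
      · exact levCongr (v+w-u) v i (hφoff i hik hi))
    have L1 : lev N m (v+w-u) j = lev N m w j := levCongr (v+w-u) w j hφj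
    have L2 : lev N m u j = lev N m v j := levCongr u v j hvjuj.symm
    omega

end Aux
open Classical in
lemma AminusAplusCard (N m : ℕ) [NeZero m] (v w : Fin N → ZMod m) :
    Aminus N m (Aplus N m (indV N m v)) w =
      ((Finset.univ.filter (fun u : Fin N → ZMod m =>
        (adj N m w u ∧ distO N m w < distO N m u) ∧
        (adj N m u v ∧ distO N m v < distO N m u))).card : ℂ) := by
  have inner : ∀ u : Fin N → ZMod m,
      Aplus N m (indV N m v) u
        = if adj N m u v ∧ distO N m v < distO N m u then (1:ℂ) else 0 := by
    intro u
    unfold Aplus indV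
    rw [Finset.sum_eq_single v]
    · simp
    · intro b _ hb; simp [hb]
    · simp
  unfold Aminus
  rw [Finset.sum_congr rfl (fun u _ => by rw [inner u]), ← Finset.sum_boole]
  exact Finset.sum_congr rfl (fun u _ => by simp only [ite_and])

open Classical in
lemma AplusAminusCard (N m : ℕ) [NeZero m] (v w : Fin N → ZMod m) :
    Aplus N m (Aminus N m (indV N m v)) w =
      ((Finset.univ.filter (fun u : Fin N → ZMod m =>
        (adj N m w u ∧ distO N m u < distO N m w) ∧
        (adj N m u v ∧ distO N m u < distO N m v))).card : ℂ) := by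
  have inner : ∀ u : Fin N → ZMod m,
      Aminus N m (indV N m v) u
        = if adj N m u v ∧ distO N m u < distO N m v then (1:ℂ) else 0 := by
    intro u
    unfold Aminus indV
    rw [Finset.sum_eq_single v]
    · simp
    · intro b _ hb; simp [hb]
    · simp
  unfold Aplus
  rw [Finset.sum_congr rfl (fun u _ => by rw [inner u]), ← Finset.sum_boole]
  exact Finset.sum_congr rfl (fun u _ => by simp only [ite_and])

/-- the commutator `C = A₋A₊ - A₊A₋` on `C_m^N` (`m ≥ 3`) is supported
on pairs of vertices with equal level vectors. -/
theorem commutator_equal_level_vectors (N m : ℕ) [NeZero m] (hN : 1 ≤ N) (hm : 3 ≤ m)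
    (v w : Fin N → ZMod m)
    (h : Aminus N m (Aplus N m (indV N m v)) w
        - Aplus N m (Aminus N m (indV N m v)) w ≠ 0) :
    ∀ k : Fin N, lev N m w k = lev N m v k := by
  classical
  by_contra hcon
  push_neg at hcon
  obtain ⟨k0, hk0⟩ := hcon
  apply h
  rw [AminusAplusCard, AplusAminusCard, sub_eq_zero]
  have hcard : (Finset.univ.filter (fun u : Fin N → ZMod m =>
        (adj N m w u ∧ distO N m w < distO N m u) ∧
        (adj N m u v ∧ distO N m v < distO N m u))).card =
      (Finset.univ.filter (fun u : Fin N → ZMod m =>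
        (adj N m w u ∧ distO N m u < distO N m w) ∧
        (adj N m u v ∧ distO N m u < distO N m v))).card := by
    apply Finset.card_bij' (fun u _ => v + w - u) (fun u _ => v + w - u)
    · intro u hu
      rw [Finset.mem_filter] at hu ⊢
      obtain ⟨-, ⟨a1, d1⟩, ⟨a2, d2⟩⟩ := hu
      rcases keyLemma hm v w u a1 a2 (Or.inl ⟨d1, d2⟩) with hL | ⟨b1, b2, hd⟩
      · exact absurd (hL k0) hk0
      · exact ⟨Finset.mem_univ _, ⟨b1, by omega⟩, ⟨b2, by omega⟩⟩
    · intro u hu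
      rw [Finset.mem_filter] at hu ⊢
      obtain ⟨-, ⟨a1, d1⟩, ⟨a2, d2⟩⟩ := hu
      rcases keyLemma hm v w u a1 a2 (Or.inr ⟨d1, d2⟩) with hL | ⟨b1, b2, hd⟩
      · exact absurd (hL k0) hk0
      · exact ⟨Finset.mem_univ _, ⟨b1, by omega⟩, ⟨b2, by omega⟩⟩
    · intro u _; ring
    · intro u _; ring
  exact_mod_cast congrArg (Nat.cast : ℕ → ℂ) hcard
end

section
/- Let m = 3 and r ∈ ℕ. If f is a vertex function on C_3^N supported in Σ_r (that is, f(v) = 0 whenever d(v) ≠ r), then for every vertex v, (A_-(A_+ f))(v) − (A_+(A_- f))(v) = (2N − 3r) · f(v) − (A_0 f)(v); in other words, C f = (2N − 3r) • f − A_0 f, so C + A_0 acts diagonally on functions supported in Σ_r. -/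
open Finset

def lev3 (a : ZMod 3) : ℕ := if a = 0 then 0 else 1

lemma lev_eq3 {N : ℕ} (v : Fin N → ZMod 3) (k : Fin N) : lev N 3 v k = lev3 (v k) := by
  have : ∀ x : ZMod 3, min x.val (3 - x.val) = lev3 x := by decide
  exact this (v k)

lemma distO_eq3 {N : ℕ} (v : Fin N → ZMod 3) : distO N 3 v = ∑ k, lev3 (v k) :=
  Finset.sum_congr rfl (fun k _ => lev_eq3 v k)

lemma add_eV {N : ℕ} (v : Fin N → ZMod 3) (k : Fin N) :
    v + eV N 3 k = Function.update v k (v k + 1) := by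
  funext j
  by_cases h : j = k
  · subst h; simp [eV]
  · simp [eV, h, Function.update_of_ne h]

lemma sub_eV {N : ℕ} (v : Fin N → ZMod 3) (k : Fin N) :
    v - eV N 3 k = Function.update v k (v k - 1) := by
  funext j
  by_cases h : j = k
  · subst h; simp [eV]
  · simp [eV, h, Function.update_of_ne h]

lemma adj_iff {N : ℕ} (v w : Fin N → ZMod 3) :
    adj N 3 v w ↔ ∃ k, w = Function.update v k (v k + 1) ∨ w = Function.update v k (v k - 1) := by
  simp [adj, add_eV, sub_eV]

lemma distO_update3 {N : ℕ} (v : Fin N → ZMod 3) (k : Fin N) (a : ZMod 3) :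
    distO N 3 (Function.update v k a) + lev3 (v k) = distO N 3 v + lev3 a := by
  rw [distO_eq3, distO_eq3,
    ← Finset.sum_erase_add _ _ (Finset.mem_univ k),
    ← Finset.sum_erase_add Finset.univ (fun j => lev3 (v j)) (Finset.mem_univ k)]
  have h : ∀ j ∈ Finset.univ.erase k, lev3 (Function.update v k a j) = lev3 (v j) :=
    fun j hj => by rw [Function.update_of_ne (Finset.ne_of_mem_erase hj)]
  rw [Finset.sum_congr rfl h, Function.update_self]
  omega

lemma plus_aux : ∀ x a : ZMod 3, (a = x + 1 ∨ a = x - 1) → lev3 a < lev3 x → x ≠ 0 ∧ a = 0 := by decide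

lemma minus_aux : ∀ x a : ZMod 3, (a = x + 1 ∨ a = x - 1) → lev3 x < lev3 a → x = 0 ∧ (a = 1 ∨ a = 2) := by decide

lemma zero_aux : ∀ x a : ZMod 3, (a = x + 1 ∨ a = x - 1) → lev3 a = lev3 x → x ≠ 0 ∧ a = -x := by decide

lemma plus_rev : ∀ x : ZMod 3, x ≠ 0 → ((0:ZMod 3) = x + 1 ∨ (0:ZMod 3) = x - 1) ∧ lev3 0 < lev3 x := by decide

lemma minus_rev1 : ∀ x : ZMod 3, x = 0 → ((1:ZMod 3) = x + 1 ∨ (1:ZMod 3) = x - 1) ∧ lev3 x < lev3 1 := by decide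

lemma minus_rev2 : ∀ x : ZMod 3, x = 0 → ((2:ZMod 3) = x + 1 ∨ (2:ZMod 3) = x - 1) ∧ lev3 x < lev3 2 := by decide

lemma zero_rev : ∀ x : ZMod 3, x ≠ 0 → (-x = x + 1 ∨ -x = x - 1) ∧ lev3 (-x) = lev3 x := by decide

lemma neg_self3 : ∀ x : ZMod 3, x = -x → x = 0 := by decide

lemma distO_lt_iff {N : ℕ} (v : Fin N → ZMod 3) (k : Fin N) (a : ZMod 3) :
    distO N 3 (Function.update v k a) < distO N 3 v ↔ lev3 a < lev3 (v k) := by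
  have := distO_update3 v k a; omega

lemma distO_gt_iff {N : ℕ} (v : Fin N → ZMod 3) (k : Fin N) (a : ZMod 3) :
    distO N 3 v < distO N 3 (Function.update v k a) ↔ lev3 (v k) < lev3 a := by
  have := distO_update3 v k a; omega

lemma distO_eq_iff {N : ℕ} (v : Fin N → ZMod 3) (k : Fin N) (a : ZMod 3) :
    distO N 3 (Function.update v k a) = distO N 3 v ↔ lev3 a = lev3 (v k) := by
  have := distO_update3 v k a; omega

lemma plus_iff {N : ℕ} (v w : Fin N → ZMod 3) :
    (adj N 3 v w ∧ distO N 3 w < distO N 3 v) ↔ ∃ k, v k ≠ 0 ∧ w = Function.update v k 0 := by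
  constructor
  · rintro ⟨hadj, hlt⟩
    rw [adj_iff] at hadj
    obtain ⟨k, hk | hk⟩ := hadj <;> subst hk <;> rw [distO_lt_iff] at hlt
    · obtain ⟨h1, h2⟩ := plus_aux (v k) (v k + 1) (Or.inl rfl) hlt
      exact ⟨k, h1, by rw [h2]⟩
    · obtain ⟨h1, h2⟩ := plus_aux (v k) (v k - 1) (Or.inr rfl) hlt
      exact ⟨k, h1, by rw [h2]⟩
  · rintro ⟨k, hvk, rfl⟩
    obtain ⟨hor, hlt⟩ := plus_rev (v k) hvk
    refine ⟨?_, (distO_lt_iff v k 0).mpr hlt⟩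
    rw [adj_iff]
    rcases hor with h | h
    · exact ⟨k, Or.inl (by rw [← h])⟩
    · exact ⟨k, Or.inr (by rw [← h])⟩

lemma minus_iff {N : ℕ} (v w : Fin N → ZMod 3) :
    (adj N 3 v w ∧ distO N 3 v < distO N 3 w) ↔
      ∃ k, v k = 0 ∧ (w = Function.update v k 1 ∨ w = Function.update v k 2) := by
  constructor
  · rintro ⟨hadj, hlt⟩
    rw [adj_iff] at hadj
    obtain ⟨k, hk | hk⟩ := hadj <;> subst hk <;> rw [distO_gt_iff] at hlt
    · obtain ⟨h1, h2⟩ := minus_aux (v k) (v k + 1) (Or.inl rfl) hlt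
      refine ⟨k, h1, ?_⟩
      rcases h2 with h | h
      · exact Or.inl (by rw [h])
      · exact Or.inr (by rw [h])
    · obtain ⟨h1, h2⟩ := minus_aux (v k) (v k - 1) (Or.inr rfl) hlt
      refine ⟨k, h1, ?_⟩
      rcases h2 with h | h
      · exact Or.inl (by rw [h])
      · exact Or.inr (by rw [h])
  · rintro ⟨k, hvk, rfl | rfl⟩
    · obtain ⟨hor, hlt⟩ := minus_rev1 (v k) hvk
      refine ⟨?_, (distO_gt_iff v k 1).mpr hlt⟩
      rw [adj_iff]
      rcases hor with h | h
      · exact ⟨k, Or.inl (by rw [← h])⟩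
      · exact ⟨k, Or.inr (by rw [← h])⟩
    · obtain ⟨hor, hlt⟩ := minus_rev2 (v k) hvk
      refine ⟨?_, (distO_gt_iff v k 2).mpr hlt⟩
      rw [adj_iff]
      rcases hor with h | h
      · exact ⟨k, Or.inl (by rw [← h])⟩
      · exact ⟨k, Or.inr (by rw [← h])⟩

lemma zero_iff {N : ℕ} (v w : Fin N → ZMod 3) :
    (adj N 3 v w ∧ distO N 3 w = distO N 3 v) ↔
      ∃ k, v k ≠ 0 ∧ w = Function.update v k (-(v k)) := by
  constructor
  · rintro ⟨hadj, heq⟩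
    rw [adj_iff] at hadj
    obtain ⟨k, hk | hk⟩ := hadj <;> subst hk <;> rw [distO_eq_iff] at heq
    · obtain ⟨h1, h2⟩ := zero_aux (v k) (v k + 1) (Or.inl rfl) heq
      exact ⟨k, h1, by rw [h2]⟩
    · obtain ⟨h1, h2⟩ := zero_aux (v k) (v k - 1) (Or.inr rfl) heq
      exact ⟨k, h1, by rw [h2]⟩
  · rintro ⟨k, hvk, rfl⟩
    obtain ⟨hor, heq⟩ := zero_rev (v k) hvk
    refine ⟨?_, (distO_eq_iff v k (-(v k))).mpr heq⟩
    rw [adj_iff]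
    rcases hor with h | h
    · exact ⟨k, Or.inl (by rw [← h])⟩
    · exact ⟨k, Or.inr (by rw [← h])⟩

open Classical in

open Classical in

open Classical in

lemma Aplus_eq {N : ℕ} (f : (Fin N → ZMod 3) → ℂ) (v : Fin N → ZMod 3) :
    Aplus N 3 f v = ∑ k, if v k ≠ 0 then f (Function.update v k 0) else 0 := by
  classical
  unfold Aplus
  have key : ∀ w : Fin N → ZMod 3,
      (if adj N 3 v w ∧ distO N 3 w < distO N 3 v then f w else 0)
        = ∑ k, if v k ≠ 0 ∧ w = Function.update v k 0 then f w else 0 := by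
    intro w
    by_cases hP : adj N 3 v w ∧ distO N 3 w < distO N 3 v
    · rw [if_pos hP]
      obtain ⟨k0, hk0, hw⟩ := (plus_iff v w).mp hP
      rw [Finset.sum_eq_single k0]
      · rw [if_pos ⟨hk0, hw⟩]
      · intro k _ hkk
        rw [if_neg]
        rintro ⟨hvk, hw'⟩
        have h1 : w k = 0 := by rw [hw', Function.update_self]
        have h2 : w k = v k := by rw [hw, Function.update_of_ne hkk]
        exact hvk (by rw [← h2, h1])
      · exact fun h => absurd (Finset.mem_univ k0) h
    · rw [if_neg hP]
      symm
      apply Finset.sum_eq_zero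
      intro k _
      rw [if_neg]
      rintro ⟨h1, h2⟩
      exact hP ((plus_iff v w).mpr ⟨k, h1, h2⟩)
  rw [Finset.sum_congr rfl (fun w _ => key w), Finset.sum_comm]
  refine Finset.sum_congr rfl (fun k _ => ?_)
  by_cases hvk : v k ≠ 0
  · rw [if_pos hvk]
    have : ∀ w : Fin N → ZMod 3, (if v k ≠ 0 ∧ w = Function.update v k 0 then f w else 0)
        = if w = Function.update v k 0 then f w else 0 := by
      intro w
      by_cases h : w = Function.update v k 0
      · rw [if_pos ⟨hvk, h⟩, if_pos h]
      · rw [if_neg (fun hc => h hc.2), if_neg h]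
    rw [Finset.sum_congr rfl (fun w _ => this w), Finset.sum_ite_eq' Finset.univ]
    simp
  · rw [if_neg hvk]
    apply Finset.sum_eq_zero
    intro w _
    exact if_neg (fun hc => hvk hc.1)

lemma Azero_eq {N : ℕ} (f : (Fin N → ZMod 3) → ℂ) (v : Fin N → ZMod 3) :
    Azero N 3 f v = ∑ k, if v k ≠ 0 then f (Function.update v k (-(v k))) else 0 := by
  classical
  unfold Azero
  have key : ∀ w : Fin N → ZMod 3,
      (if adj N 3 v w ∧ distO N 3 w = distO N 3 v then f w else 0)
        = ∑ k, if v k ≠ 0 ∧ w = Function.update v k (-(v k)) then f w else 0 := by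
    intro w
    by_cases hP : adj N 3 v w ∧ distO N 3 w = distO N 3 v
    · rw [if_pos hP]
      obtain ⟨k0, hk0, hw⟩ := (zero_iff v w).mp hP
      rw [Finset.sum_eq_single k0]
      · rw [if_pos ⟨hk0, hw⟩]
      · intro k _ hkk
        rw [if_neg]
        rintro ⟨hvk, hw'⟩
        have h1 : w k = -(v k) := by rw [hw', Function.update_self]
        have h2 : w k = v k := by rw [hw, Function.update_of_ne hkk]
        exact hvk (neg_self3 (v k) (by rw [← h1, h2]))
      · exact fun h => absurd (Finset.mem_univ k0) h
    · rw [if_neg hP]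
      symm
      apply Finset.sum_eq_zero
      intro k _
      rw [if_neg]
      rintro ⟨h1, h2⟩
      exact hP ((zero_iff v w).mpr ⟨k, h1, h2⟩)
  rw [Finset.sum_congr rfl (fun w _ => key w), Finset.sum_comm]
  refine Finset.sum_congr rfl (fun k _ => ?_)
  by_cases hvk : v k ≠ 0
  · rw [if_pos hvk]
    have : ∀ w : Fin N → ZMod 3,
        (if v k ≠ 0 ∧ w = Function.update v k (-(v k)) then f w else 0)
        = if w = Function.update v k (-(v k)) then f w else 0 := by
      intro w
      by_cases h : w = Function.update v k (-(v k))
      · rw [if_pos ⟨hvk, h⟩, if_pos h]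
      · rw [if_neg (fun hc => h hc.2), if_neg h]
    rw [Finset.sum_congr rfl (fun w _ => this w), Finset.sum_ite_eq' Finset.univ]
    simp
  · rw [if_neg hvk]
    apply Finset.sum_eq_zero
    intro w _
    exact if_neg (fun hc => hvk hc.1)

lemma one_ne_zero3 : (1:ZMod 3) ≠ 0 := by decide

lemma two_ne_zero3 : (2:ZMod 3) ≠ 0 := by decide

lemma one_ne_two3 : (1:ZMod 3) ≠ 2 := by decide

lemma Aminus_eq {N : ℕ} (f : (Fin N → ZMod 3) → ℂ) (v : Fin N → ZMod 3) :
    Aminus N 3 f v = ∑ k, if v k = 0 then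
      f (Function.update v k 1) + f (Function.update v k 2) else 0 := by
  classical
  unfold Aminus
  have key : ∀ w : Fin N → ZMod 3,
      (if adj N 3 v w ∧ distO N 3 v < distO N 3 w then f w else 0)
        = ∑ k, ((if v k = 0 ∧ w = Function.update v k 1 then f w else 0)
              + (if v k = 0 ∧ w = Function.update v k 2 then f w else 0)) := by
    intro w
    by_cases hP : adj N 3 v w ∧ distO N 3 v < distO N 3 w
    · rw [if_pos hP]
      obtain ⟨k0, hk0, hw⟩ := (minus_iff v w).mp hP
      rw [Finset.sum_eq_single k0]
      · rcases hw with hw | hw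
        · rw [if_pos ⟨hk0, hw⟩, if_neg, add_zero]
          rintro ⟨-, hw'⟩
          have : (1:ZMod 3) = 2 := by
            have e1 : w k0 = 1 := by rw [hw, Function.update_self]
            have e2 : w k0 = 2 := by rw [hw', Function.update_self]
            rw [← e1, e2]
          exact one_ne_two3 this
        · have hne : ¬(v k0 = 0 ∧ w = Function.update v k0 1) := by
            rintro ⟨-, hw'⟩
            have e1 : w k0 = 1 := by rw [hw', Function.update_self]
            have e2 : w k0 = 2 := by rw [hw, Function.update_self]
            exact one_ne_two3 (by rw [← e1, e2])
          rw [if_neg hne, if_pos ⟨hk0, hw⟩, zero_add]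
      · intro k _ hkk
        have hwk : w k = v k := by
          rcases hw with hw | hw <;> rw [hw, Function.update_of_ne hkk]
        rw [if_neg, if_neg, add_zero]
        · rintro ⟨hvk, hw'⟩
          have : w k = 2 := by rw [hw', Function.update_self]
          exact two_ne_zero3 (by rw [← this, hwk, hvk])
        · rintro ⟨hvk, hw'⟩
          have : w k = 1 := by rw [hw', Function.update_self]
          exact one_ne_zero3 (by rw [← this, hwk, hvk])
      · exact fun h => absurd (Finset.mem_univ k0) h
    · rw [if_neg hP]
      symm
      apply Finset.sum_eq_zero
      intro k _
      rw [if_neg, if_neg, add_zero]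
      · rintro ⟨h1, h2⟩
        exact hP ((minus_iff v w).mpr ⟨k, h1, Or.inr h2⟩)
      · rintro ⟨h1, h2⟩
        exact hP ((minus_iff v w).mpr ⟨k, h1, Or.inl h2⟩)
  rw [Finset.sum_congr rfl (fun w _ => key w), Finset.sum_comm]
  refine Finset.sum_congr rfl (fun k _ => ?_)
  rw [Finset.sum_add_distrib]
  by_cases hvk : v k = 0
  · rw [if_pos hvk]
    have h1 : ∀ w : Fin N → ZMod 3, (if v k = 0 ∧ w = Function.update v k 1 then f w else 0)
        = if w = Function.update v k 1 then f w else 0 := by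
      intro w
      by_cases h : w = Function.update v k 1
      · rw [if_pos ⟨hvk, h⟩, if_pos h]
      · rw [if_neg (fun hc => h hc.2), if_neg h]
    have h2 : ∀ w : Fin N → ZMod 3, (if v k = 0 ∧ w = Function.update v k 2 then f w else 0)
        = if w = Function.update v k 2 then f w else 0 := by
      intro w
      by_cases h : w = Function.update v k 2
      · rw [if_pos ⟨hvk, h⟩, if_pos h]
      · rw [if_neg (fun hc => h hc.2), if_neg h]
    rw [Finset.sum_congr rfl (fun w _ => h1 w), Finset.sum_congr rfl (fun w _ => h2 w),
      Finset.sum_ite_eq' Finset.univ, Finset.sum_ite_eq' Finset.univ]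
    simp
  · rw [if_neg hvk]
    rw [Finset.sum_eq_zero (fun w _ => if_neg (fun hc => hvk hc.1)),
      Finset.sum_eq_zero (fun w _ => if_neg (fun hc => hvk hc.1)), add_zero]

lemma zmod3_cases (x : ZMod 3) : x = 0 ∨ x = 1 ∨ x = 2 := by revert x; decide

lemma inner_plus {N : ℕ} (f : (Fin N → ZMod 3) → ℂ) (v : Fin N → ZMod 3) (k : Fin N)
    (hvk : v k = 0) (ε : ZMod 3) (hε : ε ≠ 0) :
    Aplus N 3 f (Function.update v k ε)
      = f v + ∑ j, if j ≠ k ∧ v j ≠ 0 then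
          f (Function.update (Function.update v k ε) j 0) else 0 := by
  classical
  rw [Aplus_eq,
    ← Finset.add_sum_erase Finset.univ _ (Finset.mem_univ k),
    ← Finset.add_sum_erase Finset.univ
      (fun j => if j ≠ k ∧ v j ≠ 0 then
        f (Function.update (Function.update v k ε) j 0) else 0) (Finset.mem_univ k)]
  have hk1 : (if Function.update v k ε k ≠ 0 then
      f (Function.update (Function.update v k ε) k 0) else 0) = f v := by
    rw [Function.update_self, if_pos hε, Function.update_idem, ← hvk, Function.update_eq_self]
  have hk2 : (if k ≠ k ∧ v k ≠ 0 then
      f (Function.update (Function.update v k ε) k 0) else 0) = 0 :=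
    if_neg (fun hc => hc.1 rfl)
  rw [hk1, hk2, zero_add]
  congr 1
  refine Finset.sum_congr rfl (fun j hj => ?_)
  have hjk : j ≠ k := Finset.ne_of_mem_erase hj
  rw [Function.update_of_ne hjk]
  by_cases h : v j ≠ 0
  · rw [if_pos h, if_pos ⟨hjk, h⟩]
  · rw [if_neg h, if_neg (fun hc => h hc.2)]

lemma pair_eq {N : ℕ} (f : (Fin N → ZMod 3) → ℂ) (v : Fin N → ZMod 3) (j : Fin N)
    (hvj : v j ≠ 0) :
    f (Function.update v j 1) + f (Function.update v j 2)
      = f v + f (Function.update v j (-(v j))) := by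
  rcases zmod3_cases (v j) with h | h | h
  · exact absurd h hvj
  · have e1 : Function.update v j 1 = v := by rw [← h, Function.update_eq_self]
    have e2 : -(v j) = 2 := by rw [h]; decide
    rw [e1, e2]
  · have e1 : Function.update v j 2 = v := by rw [← h, Function.update_eq_self]
    have e2 : -(v j) = 1 := by rw [h]; decide
    rw [e1, e2, add_comm]

lemma inner_minus {N : ℕ} (f : (Fin N → ZMod 3) → ℂ) (v : Fin N → ZMod 3) (j : Fin N)
    (hvj : v j ≠ 0) :
    Aminus N 3 f (Function.update v j 0)
      = (f v + f (Function.update v j (-(v j)))) + ∑ k, if k ≠ j ∧ v k = 0 then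
          f (Function.update (Function.update v j 0) k 1)
            + f (Function.update (Function.update v j 0) k 2) else 0 := by
  classical
  rw [Aminus_eq,
    ← Finset.add_sum_erase Finset.univ _ (Finset.mem_univ j),
    ← Finset.add_sum_erase Finset.univ
      (fun k => if k ≠ j ∧ v k = 0 then
        f (Function.update (Function.update v j 0) k 1)
          + f (Function.update (Function.update v j 0) k 2) else 0) (Finset.mem_univ j)]
  have hk1 : (if Function.update v j 0 j = 0 then
      f (Function.update (Function.update v j 0) j 1)
        + f (Function.update (Function.update v j 0) j 2) else 0)
      = f v + f (Function.update v j (-(v j))) := by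
    rw [Function.update_self, if_pos rfl, Function.update_idem, Function.update_idem]
    exact pair_eq f v j hvj
  have hk2 : (if j ≠ j ∧ v j = 0 then
      f (Function.update (Function.update v j 0) j 1)
        + f (Function.update (Function.update v j 0) j 2) else 0) = 0 :=
    if_neg (fun hc => hc.1 rfl)
  rw [hk1, hk2, zero_add]
  congr 1
  refine Finset.sum_congr rfl (fun k hk => ?_)
  have hkj : k ≠ j := Finset.ne_of_mem_erase hk
  rw [Function.update_of_ne hkj]
  by_cases h : v k = 0
  · rw [if_pos h, if_pos ⟨hkj, h⟩]
  · rw [if_neg h, if_neg (fun hc => h hc.2)]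

/-- on `C_3^N`, for `f` supported in `Σ_r`,
`C f = (2N - 3r) • f - A₀ f`. -/
theorem commutator_C3 (N r : ℕ) (hN : 1 ≤ N)
    (f : (Fin N → ZMod 3) → ℂ)
    (hf : ∀ v, distO N 3 v ≠ r → f v = 0) :
    ∀ v, Aminus N 3 (Aplus N 3 f) v - Aplus N 3 (Aminus N 3 f) v
      = (2 * (N : ℂ) - 3 * (r : ℂ)) * f v - Azero N 3 f v := by
  classical
  intro v
  set F : Fin N → Fin N → ℂ := fun k j =>
    if v k = 0 ∧ j ≠ k ∧ v j ≠ 0 then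
      f (Function.update (Function.update v k 1) j 0)
        + f (Function.update (Function.update v k 2) j 0) else 0 with hF
  have hA : Aminus N 3 (Aplus N 3 f) v
      = (∑ k, if v k = 0 then 2 * f v else 0) + ∑ k, ∑ j, F k j := by
    rw [Aminus_eq, ← Finset.sum_add_distrib]
    refine Finset.sum_congr rfl (fun k _ => ?_)
    by_cases hvk : v k = 0
    · rw [if_pos hvk, if_pos hvk, inner_plus f v k hvk 1 one_ne_zero3,
        inner_plus f v k hvk 2 two_ne_zero3]
      have hsum : ∑ j, ((if j ≠ k ∧ v j ≠ 0 then
            f (Function.update (Function.update v k 1) j 0) else 0)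
          + (if j ≠ k ∧ v j ≠ 0 then
            f (Function.update (Function.update v k 2) j 0) else 0)) = ∑ j, F k j := by
        refine Finset.sum_congr rfl (fun j _ => ?_)
        by_cases h : j ≠ k ∧ v j ≠ 0
        · simp only [hF]
          rw [if_pos h, if_pos h, if_pos ⟨hvk, h.1, h.2⟩]
        · simp only [hF]
          rw [if_neg h, if_neg h, if_neg (fun hc => h ⟨hc.2.1, hc.2.2⟩), add_zero]
      calc f v + (∑ j, if j ≠ k ∧ v j ≠ 0 then
              f (Function.update (Function.update v k 1) j 0) else 0)
            + (f v + ∑ j, if j ≠ k ∧ v j ≠ 0 then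
              f (Function.update (Function.update v k 2) j 0) else 0)
          = 2 * f v + ((∑ j, if j ≠ k ∧ v j ≠ 0 then
              f (Function.update (Function.update v k 1) j 0) else 0)
            + ∑ j, if j ≠ k ∧ v j ≠ 0 then
              f (Function.update (Function.update v k 2) j 0) else 0) := by ring
        _ = 2 * f v + ∑ j, F k j := by rw [← Finset.sum_add_distrib, hsum]
    · rw [if_neg hvk, if_neg hvk, zero_add,
        Finset.sum_eq_zero (fun j _ => by simp only [hF]; exact if_neg (fun hc => hvk hc.1))]
  have hB : Aplus N 3 (Aminus N 3 f) v
      = (∑ j, if v j ≠ 0 then f v + f (Function.update v j (-(v j))) else 0)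
        + ∑ j, ∑ k, F k j := by
    rw [Aplus_eq, ← Finset.sum_add_distrib]
    refine Finset.sum_congr rfl (fun j _ => ?_)
    by_cases hvj : v j ≠ 0
    · rw [if_pos hvj, if_pos hvj, inner_minus f v j hvj]
      congr 1
      refine Finset.sum_congr rfl (fun k _ => ?_)
      by_cases h : k ≠ j ∧ v k = 0
      · simp only [hF]
        rw [if_pos h,
          Function.update_comm (Ne.symm h.1) (0:ZMod 3) (1:ZMod 3) v,
          Function.update_comm (Ne.symm h.1) (0:ZMod 3) (2:ZMod 3) v,
          if_pos ⟨h.2, Ne.symm h.1, hvj⟩]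
      · simp only [hF]
        rw [if_neg h, if_neg (fun hc => h ⟨Ne.symm hc.2.1, hc.1⟩)]
    · rw [if_neg hvj, if_neg hvj, zero_add,
        Finset.sum_eq_zero (fun k _ => by simp only [hF]; exact if_neg (fun hc => hvj hc.2.2))]
  have hswap : ∑ k, ∑ j, F k j = ∑ j, ∑ k, F k j := Finset.sum_comm
  have hsplit : (∑ j, if v j ≠ 0 then f v + f (Function.update v j (-(v j))) else 0)
      = (∑ j, if v j ≠ 0 then f v else 0) + Azero N 3 f v := by
    rw [Azero_eq, ← Finset.sum_add_distrib]
    refine Finset.sum_congr rfl (fun j _ => ?_)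
    by_cases h : v j ≠ 0
    · rw [if_pos h, if_pos h, if_pos h]
    · rw [if_neg h, if_neg h, if_neg h, add_zero]
  have e1 : (∑ k, if v k = 0 then 2 * f v else 0)
      = ((Finset.univ.filter (fun k => v k = 0)).card : ℂ) * (2 * f v) := by
    rw [← Finset.sum_filter, Finset.sum_const, nsmul_eq_mul]
  have e2 : (∑ j, if v j ≠ 0 then f v else 0)
      = ((Finset.univ.filter (fun j => v j ≠ 0)).card : ℂ) * f v := by
    rw [← Finset.sum_filter, Finset.sum_const, nsmul_eq_mul]
  set cZ := (Finset.univ.filter (fun k : Fin N => v k = 0)).card with hcZ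
  set cN := (Finset.univ.filter (fun j : Fin N => v j ≠ 0)).card with hcN
  have hc : cZ + cN = N := by
    rw [hcZ, hcN]
    rw [Finset.card_filter_add_card_filter_not]
    simp
  have hd : distO N 3 v = cN := by
    rw [distO_eq3]
    have : ∀ k : Fin N, lev3 (v k) = if v k ≠ 0 then 1 else 0 := by
      intro k; unfold lev3; by_cases h : v k = 0 <;> simp [h]
    rw [Finset.sum_congr rfl (fun k _ => this k), ← Finset.sum_filter, Finset.sum_const,
      smul_eq_mul, mul_one, hcN]
  rw [hA, hB, hswap, hsplit, e1, e2]
  by_cases hfv : f v = 0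
  · rw [hfv]; ring
  · have hr : distO N 3 v = r := by
      by_contra h; exact hfv (hf v h)
    have hNr : cN = r := by omega
    have hcast : (cZ : ℂ) = (N : ℂ) - r := by
      have : cZ + r = N := by omega
      have := congrArg (Nat.cast : ℕ → ℂ) this
      push_cast at this
      linear_combination this
    rw [hNr, hcast]
    ring
end

section
/- Let m = 3, let r ∈ ℕ with r ≤ N, and let s ≤ r. Let f be a vertex function on C_3^N supported in Σ_r, and suppose that for every vertex v with d(v) = r there exists a set S_v ⊆ {k : d_k(v) = 1} with |S_v| = s such that f(ṽ_k) = f(v) for every k ∈ S_v and f(ṽ_k) = −f(v) for every k ∈ {k : d_k(v) = 1} \ S_v. Then f is an eigenvector of the neutral adjacency: A_0 f = (2s − r) • f. -/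
open Finset

section aux

variable {N : ℕ}

lemma reflV_apply (k : Fin N) (v : Fin N → ZMod 3) (j : Fin N) :
    reflV N 3 k v j = if j = k then -(v k) else v j := by
  simp [reflV, Function.update_apply]

lemma lev_neg (v : Fin N → ZMod 3) (k : Fin N) :
    min (-(v k)).val (3 - (-(v k)).val) = min (v k).val (3 - (v k).val) := by
  revert v; exact fun v => (by decide : ∀ a : ZMod 3,
    min (-a).val (3 - (-a).val) = min a.val (3 - a.val)) (v k)

lemma distO_reflV (v : Fin N → ZMod 3) (k : Fin N) :
    distO N 3 (reflV N 3 k v) = distO N 3 v := by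
  unfold distO
  refine Finset.sum_congr rfl fun j _ => ?_
  unfold lev
  rw [reflV_apply]
  by_cases hj : j = k
  · simp [hj, lev_neg]
  · simp [hj]

lemma distO_eq_of_eq_off (v w : Fin N → ZMod 3) (k : Fin N)
    (h : ∀ j, j ≠ k → w j = v j) :
    (distO N 3 w = distO N 3 v ↔ lev N 3 w k = lev N 3 v k) := by
  have hsum : ∑ j ∈ Finset.univ.erase k, lev N 3 w j
      = ∑ j ∈ Finset.univ.erase k, lev N 3 v j := by
    refine Finset.sum_congr rfl fun j hj => ?_
    have hjk : j ≠ k := (Finset.mem_erase.mp hj).1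
    unfold lev; rw [h j hjk]
  unfold distO
  rw [← Finset.add_sum_erase _ _ (Finset.mem_univ k),
      ← Finset.add_sum_erase _ (lev N 3 v) (Finset.mem_univ k), hsum]
  omega

lemma neutral_iff (v w : Fin N → ZMod 3) :
    (adj N 3 v w ∧ distO N 3 w = distO N 3 v) ↔
      ∃ k, lev N 3 v k = 1 ∧ w = reflV N 3 k v := by
  constructor
  · rintro ⟨⟨k, hk | hk⟩, hd⟩
    · have hoff : ∀ j, j ≠ k → w j = v j := by
        intro j hj; simp [hk, eV, hj]
      have hwk : w k = v k + 1 := by simp [hk, eV]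
      have hlev : lev N 3 w k = lev N 3 v k :=
        (distO_eq_of_eq_off v w k hoff).mp hd
      unfold lev at hlev
      rw [hwk] at hlev
      have hvk : v k = 1 := by
        revert hlev
        exact (by decide : ∀ a : ZMod 3,
          min (a+1).val (3 - (a+1).val) = min a.val (3 - a.val) → a = 1) (v k)
      refine ⟨k, ?_, ?_⟩
      · unfold lev; rw [hvk]; decide
      · funext j
        rw [reflV_apply]
        by_cases hj : j = k
        · subst hj; rw [if_pos rfl, hwk, hvk]; decide
        · simp [hj, hoff j hj]
    · have hoff : ∀ j, j ≠ k → w j = v j := by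
        intro j hj; simp [hk, eV, hj]
      have hwk : w k = v k - 1 := by simp [hk, eV]
      have hlev : lev N 3 w k = lev N 3 v k :=
        (distO_eq_of_eq_off v w k hoff).mp hd
      unfold lev at hlev
      rw [hwk] at hlev
      have hvk : v k = 2 := by
        revert hlev
        exact (by decide : ∀ a : ZMod 3,
          min (a-1).val (3 - (a-1).val) = min a.val (3 - a.val) → a = 2) (v k)
      refine ⟨k, ?_, ?_⟩
      · unfold lev; rw [hvk]; decide
      · funext j
        rw [reflV_apply]
        by_cases hj : j = k
        · subst hj; rw [if_pos rfl, hwk, hvk]; decide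
        · simp [hj, hoff j hj]
  · rintro ⟨k, hlev, rfl⟩
    have hvk : v k = 1 ∨ v k = 2 := by
      revert hlev; unfold lev
      exact (by decide : ∀ a : ZMod 3,
        min a.val (3 - a.val) = 1 → a = 1 ∨ a = 2) (v k)
    constructor
    · refine ⟨k, ?_⟩
      rcases hvk with hvk | hvk
      · left
        funext j; rw [reflV_apply]
        by_cases hj : j = k
        · subst hj; simp [eV, hvk]; decide
        · simp [eV, hj]
      · right
        funext j; rw [reflV_apply]
        by_cases hj : j = k
        · subst hj; simp [eV, hvk]; decide
        · simp [eV, hj]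
    · exact distO_reflV v k

lemma reflV_inj (v : Fin N → ZMod 3) {k₁ k₂ : Fin N}
    (h₁ : lev N 3 v k₁ = 1) (h : reflV N 3 k₁ v = reflV N 3 k₂ v) : k₁ = k₂ := by
  by_contra hne
  have := congrFun h k₁
  rw [reflV_apply, reflV_apply, if_pos rfl, if_neg hne] at this
  have hvk : v k₁ = 1 ∨ v k₁ = 2 := by
    revert h₁; unfold lev
    exact (by decide : ∀ a : ZMod 3,
      min a.val (3 - a.val) = 1 → a = 1 ∨ a = 2) (v k₁)
  rcases hvk with hvk | hvk <;> rw [hvk] at this <;> exact absurd this (by decide)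

open Classical in
lemma Azero_eq_R1 (f : (Fin N → ZMod 3) → ℂ) (v : Fin N → ZMod 3) :
    Azero N 3 f v =
      ∑ k ∈ Finset.univ.filter (fun k => lev N 3 v k = 1), f (reflV N 3 k v) := by
  unfold Azero
  rw [← Finset.sum_filter]
  have himg : Finset.univ.filter
        (fun w => adj N 3 v w ∧ distO N 3 w = distO N 3 v)
      = (Finset.univ.filter (fun k => lev N 3 v k = 1)).image
          (fun k => reflV N 3 k v) := by
    ext w
    simp only [Finset.mem_filter, Finset.mem_image, Finset.mem_univ, true_and]
    rw [neutral_iff]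
    constructor
    · rintro ⟨k, hk, rfl⟩; exact ⟨k, hk, rfl⟩
    · rintro ⟨k, hk, rfl⟩; exact ⟨k, hk, rfl⟩
  rw [himg, Finset.sum_image]
  intro k₁ hk₁ k₂ _ h
  exact reflV_inj v (Finset.mem_filter.mp hk₁).2 h

lemma distO_eq_card (v : Fin N → ZMod 3) :
    distO N 3 v = (Finset.univ.filter (fun k => lev N 3 v k = 1)).card := by
  rw [Finset.card_filter]
  unfold distO
  refine Finset.sum_congr rfl fun k _ => ?_
  have : lev N 3 v k = 0 ∨ lev N 3 v k = 1 := by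
    unfold lev
    exact (by decide : ∀ a : ZMod 3,
      min a.val (3 - a.val) = 0 ∨ min a.val (3 - a.val) = 1) (v k)
  rcases this with h | h <;> simp [h]

end aux

/-- on `C_3^N`, if `f` is supported in `Σ_r` and at each vertex is
symmetric in `s` of the level-one coordinates and antisymmetric in the remaining
`r - s` ones, then `A₀ f = (2s - r) • f`. -/
theorem neutral_eigenvector_C3 (N r s : ℕ) (hN : 1 ≤ N) (hrN : r ≤ N) (hsr : s ≤ r)
    (f : (Fin N → ZMod 3) → ℂ)
    (hf : ∀ v, distO N 3 v ≠ r → f v = 0)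
    (hsym : ∀ v : Fin N → ZMod 3, distO N 3 v = r →
      ∃ S : Finset (Fin N),
        S ⊆ Finset.univ.filter (fun k => lev N 3 v k = 1) ∧
        S.card = s ∧
        (∀ k ∈ S, f (reflV N 3 k v) = f v) ∧
        (∀ k ∈ Finset.univ.filter (fun k => lev N 3 v k = 1) \ S,
          f (reflV N 3 k v) = - f v)) :
    ∀ v, Azero N 3 f v = (2 * (s : ℂ) - (r : ℂ)) * f v := by
  intro v
  rw [Azero_eq_R1]
  by_cases hv : distO N 3 v = r
  · obtain ⟨S, hS, hcard, hpos, hneg⟩ := hsym v hv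
    rw [← Finset.sum_sdiff hS]
    have h1 : ∑ k ∈ Finset.univ.filter (fun k => lev N 3 v k = 1) \ S,
        f (reflV N 3 k v) = ((r : ℂ) - s) * (- f v) := by
      rw [Finset.sum_congr rfl fun k hk => hneg k hk, Finset.sum_const,
        Finset.card_sdiff_of_subset hS, hcard, ← distO_eq_card, hv, nsmul_eq_mul,
        Nat.cast_sub hsr]
    have h2 : ∑ k ∈ S, f (reflV N 3 k v) = (s : ℂ) * f v := by
      rw [Finset.sum_congr rfl fun k hk => hpos k hk, Finset.sum_const, hcard,
        nsmul_eq_mul]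
    rw [h1, h2]; ring
  · have hz : f v = 0 := hf v hv
    rw [hz, mul_zero]
    refine Finset.sum_eq_zero fun k _ => ?_
    exact hf _ (by rw [distO_reflV]; exact hv)
end

section
/- Let m = 4 and r ∈ ℕ. If f is a vertex function on C_4^N supported in Σ_r (that is, f(v) = 0 whenever d(v) ≠ r), then C f = 2(N − r) • f; that is, for every vertex v, (A_-(A_+ f))(v) − (A_+(A_- f))(v) = 2(N − r) f(v). -/
open Finset

namespace Comm4
variable {N : ℕ}

def sg (s : Bool) : ZMod 4 := if s then 1 else -1

def lv (a : ZMod 4) : ℕ := min a.val (4 - a.val)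

lemma distO_eq' (v : Fin N → ZMod 4) : distO N 4 v = ∑ k, lv (v k) := rfl

def ev' (s : Bool) (k : Fin N) : Fin N → ZMod 4 := fun j => if j = k then sg s else 0

lemma add_ev (v : Fin N → ZMod 4) (s : Bool) (k : Fin N) :
    v + ev' s k = Function.update v k (v k + sg s) := by
  funext j
  rcases eq_or_ne j k with h | h
  · subst h; simp [ev', Function.update]
  · simp [ev', Function.update, h]

lemma apply_add_ev_self (v : Fin N → ZMod 4) (s : Bool) (k : Fin N) :
    (v + ev' s k) k = v k + sg s := by
  simp [ev']

lemma apply_add_ev_ne (v : Fin N → ZMod 4) (s : Bool) {k j : Fin N} (h : j ≠ k) :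
    (v + ev' s k) j = v j := by
  simp [ev', h]

lemma add_ev_ev_self (v : Fin N → ZMod 4) (s t : Bool) (k : Fin N) :
    v + ev' s k + ev' t k = Function.update v k (v k + sg s + sg t) := by
  rw [add_ev, add_ev, Function.update_self, Function.update_idem]

lemma adj_iff (v w : Fin N → ZMod 4) :
    adj N 4 v w ↔ ∃ p : Fin N × Bool, w = v + ev' p.2 p.1 := by
  have h1 : ∀ k : Fin N, ev' true k = eV N 4 k := by
    intro k; funext j; simp [ev', eV, sg]
  have h2 : ∀ k : Fin N, ev' false k = -(eV N 4 k) := by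
    intro k; funext j; rcases eq_or_ne j k with h | h <;>
      simp [ev', eV, sg, h]
  constructor
  · rintro ⟨k, h | h⟩
    · exact ⟨(k, true), by rw [h1]; exact h⟩
    · exact ⟨(k, false), by rw [h2, ← sub_eq_add_neg]; exact h⟩
  · rintro ⟨⟨k, s⟩, rfl⟩
    cases s
    · exact ⟨k, Or.inr (by rw [h2, ← sub_eq_add_neg])⟩
    · exact ⟨k, Or.inl (by rw [h1])⟩

lemma F_inj (v : Fin N → ZMod 4) : Function.Injective
    (fun p : Fin N × Bool => v + ev' p.2 p.1) := by
  rintro ⟨k, s⟩ ⟨j, t⟩ h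
  have h' : ev' s k = ev' t j := add_left_cancel h
  have hk := congrFun h' k
  simp only [ev', if_pos rfl] at hk
  have hsne : sg s ≠ 0 := by cases s <;> decide
  by_cases hkj : k = j
  · subst hkj
    simp only [if_pos rfl] at hk
    have : s = t := by
      cases s <;> cases t <;> first | rfl | (exfalso; revert hk; decide)
    rw [this]
  · exfalso; rw [if_neg hkj] at hk; exact hsne hk

open Classical in
lemma sum_adj (v : Fin N → ZMod 4) (g : (Fin N → ZMod 4) → ℂ) :
    (∑ w, if adj N 4 v w then g w else 0)
      = ∑ p : Fin N × Bool, g (v + ev' p.2 p.1) := by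
  classical
  rw [← Finset.sum_filter]
  have himg : (univ : Finset (Fin N → ZMod 4)).filter (fun w => adj N 4 v w)
      = univ.image (fun p : Fin N × Bool => v + ev' p.2 p.1) := by
    ext w
    simp only [mem_filter, mem_univ, true_and, mem_image]
    rw [adj_iff]
    constructor
    · rintro ⟨p, rfl⟩; exact ⟨p, rfl⟩
    · rintro ⟨p, rfl⟩; exact ⟨p, rfl⟩
  rw [himg, Finset.sum_image (fun p _ q _ h => F_inj v h)]

lemma distO_update (v : Fin N → ZMod 4) (k : Fin N) (b : ZMod 4) :
    distO N 4 (Function.update v k b) + lv (v k) = distO N 4 v + lv b := by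
  rw [distO_eq', distO_eq',
    ← Finset.sum_erase_add _ _ (mem_univ k), ← Finset.sum_erase_add _ _ (mem_univ k)]
  have h1 : ∑ j ∈ univ.erase k, lv (Function.update v k b j)
      = ∑ j ∈ univ.erase k, lv (v j) := by
    refine Finset.sum_congr rfl fun j hj => ?_
    rw [Function.update_of_ne (Finset.mem_erase.mp hj).1]
  rw [h1, Function.update_self]
  omega

lemma lt_iff₁ (w : Fin N → ZMod 4) (j : Fin N) (t : Bool) :
    distO N 4 (w + ev' t j) < distO N 4 w ↔ lv (w j + sg t) < lv (w j) := by
  rw [add_ev]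
  have := distO_update w j (w j + sg t)
  omega

lemma lt_iff₂ (w : Fin N → ZMod 4) (j : Fin N) (t : Bool) :
    distO N 4 w < distO N 4 (w + ev' t j) ↔ lv (w j) < lv (w j + sg t) := by
  rw [add_ev]
  have := distO_update w j (w j + sg t)
  omega

lemma diag_key (F : ZMod 4 → ℂ) (a : ZMod 4) :
    ((∑ s : Bool, ∑ t : Bool, if lv a < lv (a + sg s) ∧ lv (a + sg s + sg t) < lv (a + sg s) then F (a + sg s + sg t) else 0)
    - (∑ s : Bool, ∑ t : Bool, if lv (a + sg s) < lv a ∧ lv (a + sg s) < lv (a + sg s + sg t) then F (a + sg s + sg t) else 0))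
    = (2 - 2 * (lv a : ℂ)) * F a := by
  have ha : ∀ b : ZMod 4, b = 0 ∨ b = 1 ∨ b = 2 ∨ b = 3 := by decide
  rcases ha a with rfl|rfl|rfl|rfl <;>
  · simp only [Fintype.sum_bool, sg, if_true, Bool.false_eq_true, if_false,
      show ((0:ZMod 4)+1) = 1 from by decide, show ((0:ZMod 4)+ -1) = 3 from by decide,
      show ((1:ZMod 4)+1) = 2 from by decide, show ((1:ZMod 4)+ -1) = 0 from by decide,
      show ((2:ZMod 4)+1) = 3 from by decide, show ((2:ZMod 4)+ -1) = 1 from by decide,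
      show ((3:ZMod 4)+1) = 0 from by decide, show ((3:ZMod 4)+ -1) = 2 from by decide,
      show lv 0 = 0 from rfl, show lv 1 = 1 from rfl, show lv 2 = 2 from rfl,
      show lv 3 = 1 from rfl]
    norm_num
    try ring

lemma sum_swap4 (g : Fin N → Bool → Fin N → Bool → ℂ) :
    (∑ k, ∑ s, ∑ j ∈ univ.erase k, ∑ t, g k s j t)
    = ∑ k, ∑ s, ∑ j ∈ univ.erase k, ∑ t, g j t k s := by
  have h1 : ∀ (h : Fin N → Bool → Fin N → Bool → ℂ) (k : Fin N),
      (∑ s, ∑ j ∈ univ.erase k, ∑ t, h k s j t)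
        = ∑ j ∈ univ.erase k, ∑ s, ∑ t, h k s j t := fun h k => Finset.sum_comm
  simp_rw [h1]
  rw [Finset.sum_comm' (s' := fun j => univ.erase j) (t' := univ)
    (by intro x y; simp [Finset.mem_erase, eq_comm])]
  refine Finset.sum_congr rfl fun k _ => ?_
  rw [show (∑ s, ∑ j ∈ univ.erase k, ∑ t, g j t k s)
      = ∑ j ∈ univ.erase k, ∑ s, ∑ t, g j t k s from Finset.sum_comm]
  exact Finset.sum_congr rfl fun j _ => Finset.sum_comm

variable (f : (Fin N → ZMod 4) → ℂ) (v : Fin N → ZMod 4)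

noncomputable def T1 (k : Fin N) (s t : Bool) : ℂ :=
  if lv (v k) < lv (v k + sg s) ∧ lv (v k + sg s + sg t) < lv (v k + sg s)
  then f (Function.update v k (v k + sg s + sg t)) else 0

noncomputable def T2 (k : Fin N) (s t : Bool) : ℂ :=
  if lv (v k + sg s) < lv (v k) ∧ lv (v k + sg s) < lv (v k + sg s + sg t)
  then f (Function.update v k (v k + sg s + sg t)) else 0

noncomputable def g1 (k : Fin N) (s : Bool) (j : Fin N) (t : Bool) : ℂ :=
  if lv (v k) < lv (v k + sg s) ∧ lv (v j + sg t) < lv (v j)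
  then f (v + ev' s k + ev' t j) else 0

noncomputable def g2 (k : Fin N) (s : Bool) (j : Fin N) (t : Bool) : ℂ :=
  if lv (v k + sg s) < lv (v k) ∧ lv (v j) < lv (v j + sg t)
  then f (v + ev' s k + ev' t j) else 0

open Classical in
lemma Aminus_eq (u : Fin N → ZMod 4) :
    Aminus N 4 f u = ∑ p : Fin N × Bool,
      if lv (u p.1) < lv (u p.1 + sg p.2) then f (u + ev' p.2 p.1) else 0 := by
  have e1 : Aminus N 4 f u
      = ∑ w, if adj N 4 u w then (if distO N 4 u < distO N 4 w then f w else 0) else 0 := by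
    show (∑ w, if adj N 4 u w ∧ distO N 4 u < distO N 4 w then f w else 0) = _
    refine Finset.sum_congr rfl fun w _ => ?_
    by_cases h : adj N 4 u w <;> by_cases h2 : distO N 4 u < distO N 4 w <;> simp [h, h2]
  rw [e1, sum_adj u _]
  refine Finset.sum_congr rfl fun p _ => ?_
  have hiff := lt_iff₂ u p.1 p.2
  by_cases h : lv (u p.1) < lv (u p.1 + sg p.2)
  · rw [if_pos h, if_pos (hiff.mpr h)]
  · rw [if_neg h, if_neg (fun hc => h (hiff.mp hc))]

open Classical in
lemma Aplus_eq (u : Fin N → ZMod 4) :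
    Aplus N 4 f u = ∑ p : Fin N × Bool,
      if lv (u p.1 + sg p.2) < lv (u p.1) then f (u + ev' p.2 p.1) else 0 := by
  have e1 : Aplus N 4 f u
      = ∑ w, if adj N 4 u w then (if distO N 4 w < distO N 4 u then f w else 0) else 0 := by
    show (∑ w, if adj N 4 u w ∧ distO N 4 w < distO N 4 u then f w else 0) = _
    refine Finset.sum_congr rfl fun w _ => ?_
    by_cases h : adj N 4 u w <;> by_cases h2 : distO N 4 w < distO N 4 u <;> simp [h, h2]
  rw [e1, sum_adj u _]
  refine Finset.sum_congr rfl fun p _ => ?_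
  have hiff := lt_iff₁ u p.1 p.2
  by_cases h : lv (u p.1 + sg p.2) < lv (u p.1)
  · rw [if_pos h, if_pos (hiff.mpr h)]
  · rw [if_neg h, if_neg (fun hc => h (hiff.mp hc))]

end Comm4

namespace Comm4
variable {N : ℕ} (f : (Fin N → ZMod 4) → ℂ) (v : Fin N → ZMod 4)

noncomputable def B1 (p q : Fin N × Bool) : ℂ :=
  if lv (v p.1) < lv (v p.1 + sg p.2)
     ∧ lv ((v + ev' p.2 p.1) q.1 + sg q.2) < lv ((v + ev' p.2 p.1) q.1)
  then f (v + ev' p.2 p.1 + ev' q.2 q.1) else 0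

noncomputable def B2 (p q : Fin N × Bool) : ℂ :=
  if lv (v p.1 + sg p.2) < lv (v p.1)
     ∧ lv ((v + ev' p.2 p.1) q.1) < lv ((v + ev' p.2 p.1) q.1 + sg q.2)
  then f (v + ev' p.2 p.1 + ev' q.2 q.1) else 0

lemma L1 : Aminus N 4 (Aplus N 4 f) v = ∑ p : Fin N × Bool, ∑ q : Fin N × Bool, B1 f v p q := by
  rw [Aminus_eq]
  refine Finset.sum_congr rfl fun p _ => ?_
  rw [Aplus_eq]
  unfold B1
  split_ifs with h
  · exact Finset.sum_congr rfl fun q _ => by simp [h]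
  · exact (Finset.sum_eq_zero fun q _ => if_neg (fun hc => h hc.1)).symm

lemma R1' : Aplus N 4 (Aminus N 4 f) v = ∑ p : Fin N × Bool, ∑ q : Fin N × Bool, B2 f v p q := by
  rw [Aplus_eq]
  refine Finset.sum_congr rfl fun p _ => ?_
  rw [Aminus_eq]
  unfold B2
  split_ifs with h
  · exact Finset.sum_congr rfl fun q _ => by simp [h]
  · exact (Finset.sum_eq_zero fun q _ => if_neg (fun hc => h hc.1)).symm

lemma L2 : (∑ p : Fin N × Bool, ∑ q : Fin N × Bool, B1 f v p q)
    = (∑ k, ∑ s, ∑ t, T1 f v k s t)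
      + ∑ k, ∑ s, ∑ j ∈ univ.erase k, ∑ t, g1 f v k s j t := by
  rw [Fintype.sum_prod_type]
  rw [← Finset.sum_add_distrib]
  refine Finset.sum_congr rfl fun k _ => ?_
  rw [← Finset.sum_add_distrib]
  refine Finset.sum_congr rfl fun s _ => ?_
  rw [Fintype.sum_prod_type,
    ← Finset.add_sum_erase _ (fun j => ∑ t, B1 f v (k, s) (j, t)) (mem_univ k)]
  congr 1
  · refine Finset.sum_congr rfl fun t _ => ?_
    unfold B1 T1
    rw [apply_add_ev_self, add_ev_ev_self]
  · refine Finset.sum_congr rfl fun j hj => Finset.sum_congr rfl fun t _ => ?_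
    unfold B1 g1
    rw [apply_add_ev_ne v s (Finset.mem_erase.mp hj).1]

lemma R2 : (∑ p : Fin N × Bool, ∑ q : Fin N × Bool, B2 f v p q)
    = (∑ k, ∑ s, ∑ t, T2 f v k s t)
      + ∑ k, ∑ s, ∑ j ∈ univ.erase k, ∑ t, g2 f v k s j t := by
  rw [Fintype.sum_prod_type]
  rw [← Finset.sum_add_distrib]
  refine Finset.sum_congr rfl fun k _ => ?_
  rw [← Finset.sum_add_distrib]
  refine Finset.sum_congr rfl fun s _ => ?_
  rw [Fintype.sum_prod_type,
    ← Finset.add_sum_erase _ (fun j => ∑ t, B2 f v (k, s) (j, t)) (mem_univ k)]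
  congr 1
  · refine Finset.sum_congr rfl fun t _ => ?_
    unfold B2 T2
    rw [apply_add_ev_self, add_ev_ev_self]
  · refine Finset.sum_congr rfl fun j hj => Finset.sum_congr rfl fun t _ => ?_
    unfold B2 g2
    rw [apply_add_ev_ne v s (Finset.mem_erase.mp hj).1]

lemma cross_eq : (∑ k, ∑ s, ∑ j ∈ univ.erase k, ∑ t, g1 f v k s j t)
    = ∑ k, ∑ s, ∑ j ∈ univ.erase k, ∑ t, g2 f v k s j t := by
  rw [sum_swap4 (g1 f v)]
  refine Finset.sum_congr rfl fun k _ => Finset.sum_congr rfl fun s _ =>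
    Finset.sum_congr rfl fun j _ => Finset.sum_congr rfl fun t _ => ?_
  unfold g1 g2
  rw [show v + ev' t j + ev' s k = v + ev' s k + ev' t j from add_right_comm _ _ _]
  exact if_congr and_comm rfl rfl

lemma diag_eq :
    ((∑ k, ∑ s, ∑ t, T1 f v k s t) - (∑ k, ∑ s, ∑ t, T2 f v k s t))
      = (2 * (N : ℂ) - 2 * (distO N 4 v : ℂ)) * f v := by
  rw [← Finset.sum_sub_distrib]
  have hk : ∀ k : Fin N, ((∑ s, ∑ t, T1 f v k s t) - ∑ s, ∑ t, T2 f v k s t)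
      = (2 - 2 * (lv (v k) : ℂ)) * f v := by
    intro k
    have := diag_key (fun b => f (Function.update v k b)) (v k)
    simp only [Function.update_eq_self] at this
    exact this
  rw [Finset.sum_congr rfl fun k _ => hk k, ← Finset.sum_mul]
  congr 1
  rw [Finset.sum_sub_distrib, Finset.sum_const, card_univ, Fintype.card_fin,
    distO_eq', Nat.cast_sum, ← Finset.mul_sum]
  push_cast
  ring

end Comm4

/-- on `C_4^N`, for `f` supported in `Σ_r`, `C f = 2(N - r) • f`. -/
theorem commutator_C4 (N r : ℕ) (hN : 1 ≤ N)
    (f : (Fin N → ZMod 4) → ℂ)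
    (hf : ∀ v, distO N 4 v ≠ r → f v = 0) :
    ∀ v, Aminus N 4 (Aplus N 4 f) v - Aplus N 4 (Aminus N 4 f) v
      = 2 * ((N : ℂ) - (r : ℂ)) * f v := by
  intro v
  rw [Comm4.L1 f v, Comm4.R1' f v, Comm4.L2 f v, Comm4.R2 f v, ← Comm4.cross_eq f v,
    add_sub_add_right_eq_sub, Comm4.diag_eq f v]
  rcases eq_or_ne (distO N 4 v) r with he | he
  · rw [he]; ring
  · rw [hf v he]; ring
end

section
/- Let m = 4 and p, q ∈ ℕ. Let W_{p,q,0} denote the set of vertex functions f on C_4^N supported in Σ_{p,q} with A_- f = 0, and let V_{p,q} be the ℂ-linear span of {A_+^k f : k ∈ ℕ, f ∈ W_{p,q,0}}. Then V_{p,q} is invariant under the adjacency operator: for every g ∈ V_{p,q}, A g ∈ V_{p,q}. -/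
open Finset

/-- `W_{p,q,0}`: vertex functions supported in `Σ_{p,q}` in the kernel of `A₋`. -/
def Wpq (N p q : ℕ) : Set ((Fin N → ZMod 4) → ℂ) :=
  {f | (∀ v, ¬(cardLev N 4 v 1 = p ∧ cardLev N 4 v 2 = q) → f v = 0) ∧
       Aminus N 4 f = 0}

/-- `V_{p,q}`: the span of `{A₊^k f : k ∈ ℕ, f ∈ W_{p,q,0}}`. -/
noncomputable def Vpq (N p q : ℕ) : Submodule ℂ ((Fin N → ZMod 4) → ℂ) :=
  Submodule.span ℂ {g | ∃ k : ℕ, ∃ f ∈ Wpq N p q, g = (Aplus N 4)^[k] f}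

namespace C4aux

def lev4 (x : ZMod 4) : ℕ := min x.val (4 - x.val)

lemma lev_eq {N : ℕ} (v : Fin N → ZMod 4) (k : Fin N) : lev N 4 v k = lev4 (v k) := rfl

lemma add_eV {N : ℕ} (v : Fin N → ZMod 4) (k : Fin N) :
    v + eV N 4 k = Function.update v k (v k + 1) := by
  funext j
  by_cases h : j = k <;> simp [eV, Function.update, h]

lemma sub_eV {N : ℕ} (v : Fin N → ZMod 4) (k : Fin N) :
    v - eV N 4 k = Function.update v k (v k - 1) := by
  funext j
  by_cases h : j = k <;> simp [eV, Function.update, h, sub_eq_add_neg]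

/-- generic coordinate-sum update lemma -/
lemma sum_update_coord {N : ℕ} {M : Type*} [AddCommMonoid M] (g : ZMod 4 → M)
    (v : Fin N → ZMod 4) (k : Fin N) (a : ZMod 4) :
    (∑ j : Fin N, g (Function.update v k a j)) + g (v k)
      = (∑ j : Fin N, g (v j)) + g a := by
  classical
  have h1 : (∑ j : Fin N, g (Function.update v k a j))
      = g a + ∑ j ∈ Finset.univ.erase k, g (v j) := by
    rw [← Finset.add_sum_erase _ _ (Finset.mem_univ k)]
    simp only [Function.update_self]
    congr 1
    refine Finset.sum_congr rfl fun j hj => ?_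
    rw [Function.update_of_ne (Finset.ne_of_mem_erase hj)]
  have h2 : (∑ j : Fin N, g (v j)) = g (v k) + ∑ j ∈ Finset.univ.erase k, g (v j) := by
    rw [← Finset.add_sum_erase _ _ (Finset.mem_univ k)]
  rw [h1, h2]
  abel

lemma distO_update {N : ℕ} (v : Fin N → ZMod 4) (k : Fin N) (a : ZMod 4) :
    distO N 4 (Function.update v k a) + lev4 (v k) = distO N 4 v + lev4 a := by
  have := sum_update_coord (M := ℕ) lev4 v k a
  simpa [distO, lev_eq] using this

lemma distO_update_lt {N : ℕ} (v : Fin N → ZMod 4) (k : Fin N) (a : ZMod 4) :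
    (distO N 4 (Function.update v k a) < distO N 4 v ↔ lev4 a < lev4 (v k)) := by
  have := distO_update v k a
  omega

lemma adj_iff {N : ℕ} (v w : Fin N → ZMod 4) :
    adj N 4 v w ↔ ∃ k, w = Function.update v k (v k + 1) ∨ w = Function.update v k (v k - 1) := by
  unfold adj
  constructor <;> rintro ⟨k, h | h⟩
  · exact ⟨k, Or.inl (by rw [h, add_eV])⟩
  · exact ⟨k, Or.inr (by rw [h, sub_eV])⟩
  · exact ⟨k, Or.inl (by rw [h, add_eV])⟩
  · exact ⟨k, Or.inr (by rw [h, sub_eV])⟩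


/-- coefficient of the "down" (outer) move -/
def cL (b a : ZMod 4) : ℤ := if (a = b + 1 ∨ a = b - 1) ∧ lev4 a < lev4 b then 1 else 0
/-- coefficient of the "up" (inner) move -/
def cR (b a : ZMod 4) : ℤ := if (a = b + 1 ∨ a = b - 1) ∧ lev4 b < lev4 a then 1 else 0
/-- diagonal coefficient -/
def dC (x : ZMod 4) : ℤ := if lev4 x = 0 then 2 else if lev4 x = 2 then -2 else 0

/-- generic local operator in coordinate `k` -/
noncomputable def Lop (N : ℕ) (k : Fin N) (c : ZMod 4 → ZMod 4 → ℤ)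
    (f : (Fin N → ZMod 4) → ℂ) : (Fin N → ZMod 4) → ℂ :=
  fun v => ∑ a : ZMod 4, (c (v k) a : ℂ) * f (Function.update v k a)

lemma Lop_comm {N : ℕ} {k j : Fin N} (hkj : k ≠ j) (c c' : ZMod 4 → ZMod 4 → ℤ)
    (f : (Fin N → ZMod 4) → ℂ) :
    Lop N k c (Lop N j c' f) = Lop N j c' (Lop N k c f) := by
  funext v
  unfold Lop
  simp only [Finset.mul_sum]
  rw [Finset.sum_comm]
  refine Finset.sum_congr rfl fun a _ => Finset.sum_congr rfl fun b _ => ?_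
  rw [Function.update_of_ne hkj, Function.update_of_ne (Ne.symm hkj),
    Function.update_comm hkj]
  ring

/-- key single-coordinate commutator computation, done by `decide` -/
lemma key_comm : ∀ x b : ZMod 4,
    (∑ a : ZMod 4, (cR x a * cL a b - cL x a * cR a b))
      = if b = x then dC x else 0 := by decide

lemma Lop_Lop {N : ℕ} (k : Fin N) (c c' : ZMod 4 → ZMod 4 → ℤ)
    (f : (Fin N → ZMod 4) → ℂ) (v : Fin N → ZMod 4) :
    Lop N k c (Lop N k c' f) v
      = ∑ b : ZMod 4, ((∑ a : ZMod 4, c (v k) a * c' a b : ℤ) : ℂ)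
          * f (Function.update v k b) := by
  unfold Lop
  simp only [Function.update_self, Function.update_idem, Finset.mul_sum]
  rw [Finset.sum_comm]
  refine Finset.sum_congr rfl fun b _ => ?_
  push_cast
  rw [Finset.sum_mul]
  exact Finset.sum_congr rfl fun a _ => by ring

lemma Lop_same_comm {N : ℕ} (k : Fin N) (f : (Fin N → ZMod 4) → ℂ)
    (v : Fin N → ZMod 4) :
    Lop N k cR (Lop N k cL f) v - Lop N k cL (Lop N k cR f) v
      = (dC (v k) : ℂ) * f v := by
  rw [Lop_Lop, Lop_Lop, ← Finset.sum_sub_distrib]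
  have hstep : ∀ b : ZMod 4,
      (((∑ a : ZMod 4, cR (v k) a * cL a b : ℤ) : ℂ) * f (Function.update v k b)
        - ((∑ a : ZMod 4, cL (v k) a * cR a b : ℤ) : ℂ) * f (Function.update v k b))
      = ((if b = v k then dC (v k) else 0 : ℤ) : ℂ) * f (Function.update v k b) := by
    intro b
    rw [← key_comm (v k) b]
    push_cast [Finset.sum_sub_distrib]
    ring
  rw [Finset.sum_congr rfl fun b _ => hstep b]
  push_cast
  simp only [ite_mul, zero_mul]
  rw [Finset.sum_ite_eq' Finset.univ (v k) (fun b => (dC (v k) : ℂ) * f (Function.update v k b))]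
  simp [Function.update_eq_self]




lemma zmod4_step_facts : ∀ x a : ZMod 4, (a = x + 1 ∨ a = x - 1) →
    lev4 a ≠ lev4 x := by decide

lemma Aplus_eq_sum {N : ℕ} (f : (Fin N → ZMod 4) → ℂ) (v : Fin N → ZMod 4) :
    Aplus N 4 f v = ∑ k : Fin N, Lop N k cL f v := by
  classical
  have hrhs : (∑ k : Fin N, Lop N k cL f v)
      = ∑ p ∈ Finset.univ.filter
          (fun p : Fin N × ZMod 4 =>
            (p.2 = v p.1 + 1 ∨ p.2 = v p.1 - 1) ∧ lev4 p.2 < lev4 (v p.1)),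
          f (Function.update v p.1 p.2) := by
    rw [Finset.sum_filter]
    rw [Fintype.sum_prod_type]
    refine Finset.sum_congr rfl fun k _ => Finset.sum_congr rfl fun a _ => ?_
    simp only [cL]
    split_ifs <;> simp
  rw [hrhs]
  have hlhs : Aplus N 4 f v
      = ∑ w ∈ Finset.univ.filter
          (fun w => adj N 4 v w ∧ distO N 4 w < distO N 4 v), f w := by
    rw [Aplus, Finset.sum_filter]
  rw [hlhs]
  refine (Finset.sum_bij (fun p _ => Function.update v p.1 p.2) ?_ ?_ ?_ ?_).symm
  · rintro ⟨k, a⟩ hp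
    simp only [Finset.mem_filter, Finset.mem_univ, true_and] at hp ⊢
    refine ⟨(adj_iff v _).mpr ⟨k, ?_⟩, (distO_update_lt v k a).mpr hp.2⟩
    rcases hp.1 with h | h
    · exact Or.inl (by rw [h])
    · exact Or.inr (by rw [h])
  · rintro ⟨k, a⟩ hp ⟨k', a'⟩ hp' heq
    simp only [Finset.mem_filter, Finset.mem_univ, true_and] at hp hp'
    replace heq : Function.update v k a = Function.update v k' a' := heq
    by_cases hkk : k = k'
    · subst hkk
      have : a = a' := by
        have := congrFun heq k
        simpa using this
      simp [this]
    · exfalso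
      have hak : a = v k := by
        have := congrFun heq k
        rw [Function.update_of_ne hkk] at this
        simpa using this
      rw [hak] at hp
      exact lt_irrefl _ hp.2
  · intro w hw
    simp only [Finset.mem_filter, Finset.mem_univ, true_and] at hw
    obtain ⟨hadj, hd⟩ := hw
    obtain ⟨k, hk⟩ := (adj_iff v w).mp hadj
    rcases hk with h | h
    · refine ⟨(k, v k + 1), ?_, h.symm⟩
      simp only [Finset.mem_filter, Finset.mem_univ, true_and]
      refine ⟨by simp, ?_⟩
      rw [h] at hd
      exact (distO_update_lt v k _).mp hd
    · refine ⟨(k, v k - 1), ?_, h.symm⟩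
      simp only [Finset.mem_filter, Finset.mem_univ, true_and]
      refine ⟨by simp, ?_⟩
      rw [h] at hd
      exact (distO_update_lt v k _).mp hd
  · intros; rfl

lemma distO_update_gt {N : ℕ} (v : Fin N → ZMod 4) (k : Fin N) (a : ZMod 4) :
    (distO N 4 v < distO N 4 (Function.update v k a) ↔ lev4 (v k) < lev4 a) := by
  have := distO_update v k a
  omega

lemma Aminus_eq_sum {N : ℕ} (f : (Fin N → ZMod 4) → ℂ) (v : Fin N → ZMod 4) :
    Aminus N 4 f v = ∑ k : Fin N, Lop N k cR f v := by
  classical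
  have hrhs : (∑ k : Fin N, Lop N k cR f v)
      = ∑ p ∈ Finset.univ.filter
          (fun p : Fin N × ZMod 4 =>
            (p.2 = v p.1 + 1 ∨ p.2 = v p.1 - 1) ∧ lev4 (v p.1) < lev4 p.2),
          f (Function.update v p.1 p.2) := by
    rw [Finset.sum_filter]
    rw [Fintype.sum_prod_type]
    refine Finset.sum_congr rfl fun k _ => Finset.sum_congr rfl fun a _ => ?_
    simp only [cR]
    split_ifs <;> simp
  rw [hrhs]
  have hlhs : Aminus N 4 f v
      = ∑ w ∈ Finset.univ.filter
          (fun w => adj N 4 v w ∧ distO N 4 v < distO N 4 w), f w := by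
    rw [Aminus, Finset.sum_filter]
  rw [hlhs]
  refine (Finset.sum_bij (fun p _ => Function.update v p.1 p.2) ?_ ?_ ?_ ?_).symm
  · rintro ⟨k, a⟩ hp
    simp only [Finset.mem_filter, Finset.mem_univ, true_and] at hp ⊢
    refine ⟨(adj_iff v _).mpr ⟨k, ?_⟩, (distO_update_gt v k a).mpr hp.2⟩
    rcases hp.1 with h | h
    · exact Or.inl (by rw [h])
    · exact Or.inr (by rw [h])
  · rintro ⟨k, a⟩ hp ⟨k', a'⟩ hp' heq
    simp only [Finset.mem_filter, Finset.mem_univ, true_and] at hp hp'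
    replace heq : Function.update v k a = Function.update v k' a' := heq
    by_cases hkk : k = k'
    · subst hkk
      have : a = a' := by
        have := congrFun heq k
        simpa using this
      simp [this]
    · exfalso
      have hak : a = v k := by
        have := congrFun heq k
        rw [Function.update_of_ne hkk] at this
        simpa using this
      rw [hak] at hp
      exact lt_irrefl _ hp.2
  · intro w hw
    simp only [Finset.mem_filter, Finset.mem_univ, true_and] at hw
    obtain ⟨hadj, hd⟩ := hw
    obtain ⟨k, hk⟩ := (adj_iff v w).mp hadj
    rcases hk with h | h
    · refine ⟨(k, v k + 1), ?_, h.symm⟩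
      simp only [Finset.mem_filter, Finset.mem_univ, true_and]
      refine ⟨by simp, ?_⟩
      rw [h] at hd
      exact (distO_update_gt v k _).mp hd
    · refine ⟨(k, v k - 1), ?_, h.symm⟩
      simp only [Finset.mem_filter, Finset.mem_univ, true_and]
      refine ⟨by simp, ?_⟩
      rw [h] at hd
      exact (distO_update_gt v k _).mp hd
  · intros; rfl



lemma adj_distO_ne {N : ℕ} {v w : Fin N → ZMod 4} (h : adj N 4 v w) :
    distO N 4 w ≠ distO N 4 v := by
  obtain ⟨k, hk⟩ := (adj_iff v w).mp h
  have key : ∀ x a : ZMod 4, (a = x + 1 ∨ a = x - 1) → lev4 a ≠ lev4 x := by decide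
  rcases hk with h' | h'
  · have := distO_update v k (v k + 1)
    have hne := key (v k) (v k + 1) (Or.inl rfl)
    rw [h']
    omega
  · have := distO_update v k (v k - 1)
    have hne := key (v k) (v k - 1) (Or.inr rfl)
    rw [h']
    omega

lemma Aop_split {N : ℕ} (f : (Fin N → ZMod 4) → ℂ) :
    Aop N 4 f = fun v => Aplus N 4 f v + Aminus N 4 f v := by
  funext v
  rw [Aop, Aplus, Aminus, ← Finset.sum_add_distrib]
  refine Finset.sum_congr rfl fun w _ => ?_
  by_cases hadj : adj N 4 v w
  · have hne := adj_distO_ne hadj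
    rcases lt_or_gt_of_ne hne with hlt | hgt
    · rw [if_pos hadj, if_pos ⟨hadj, hlt⟩, if_neg (by omega ∘ And.right), add_zero]
    · rw [if_pos hadj, if_neg (fun hc => absurd hc.2 (by omega)), if_pos ⟨hadj, hgt⟩, zero_add]
  · rw [if_neg hadj, if_neg (fun hc => hadj hc.1), if_neg (fun hc => hadj hc.1), add_zero]


noncomputable def cC {N : ℕ} (v : Fin N → ZMod 4) : ℂ := ∑ k : Fin N, (dC (v k) : ℂ)

noncomputable def Dop {N : ℕ} (f : (Fin N → ZMod 4) → ℂ) : (Fin N → ZMod 4) → ℂ :=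
  fun v => cC v * f v

lemma Lop_sum {N : ℕ} (k : Fin N) (c : ZMod 4 → ZMod 4 → ℤ)
    (G : Fin N → (Fin N → ZMod 4) → ℂ) (v : Fin N → ZMod 4) :
    Lop N k c (fun w => ∑ j : Fin N, G j w) v = ∑ j : Fin N, Lop N k c (G j) v := by
  unfold Lop
  simp only [Finset.mul_sum]
  exact Finset.sum_comm

lemma Aplus_fun_eq {N : ℕ} (f : (Fin N → ZMod 4) → ℂ) :
    Aplus N 4 f = fun v => ∑ k : Fin N, Lop N k cL f v :=
  funext fun v => Aplus_eq_sum f v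

lemma Aminus_fun_eq {N : ℕ} (f : (Fin N → ZMod 4) → ℂ) :
    Aminus N 4 f = fun v => ∑ k : Fin N, Lop N k cR f v :=
  funext fun v => Aminus_eq_sum f v

lemma comm_AmAp {N : ℕ} (f : (Fin N → ZMod 4) → ℂ) (v : Fin N → ZMod 4) :
    Aminus N 4 (Aplus N 4 f) v - Aplus N 4 (Aminus N 4 f) v = cC v * f v := by
  have h1 : Aminus N 4 (Aplus N 4 f) v
      = ∑ k : Fin N, ∑ j : Fin N, Lop N k cR (Lop N j cL f) v := by
    rw [Aminus_eq_sum]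
    refine Finset.sum_congr rfl fun k _ => ?_
    rw [Aplus_fun_eq, Lop_sum]
  have h2 : Aplus N 4 (Aminus N 4 f) v
      = ∑ k : Fin N, ∑ j : Fin N, Lop N j cL (Lop N k cR f) v := by
    rw [Aplus_eq_sum]
    rw [Finset.sum_comm]
    refine Finset.sum_congr rfl fun j _ => ?_
    rw [Aminus_fun_eq, Lop_sum]
  rw [h1, h2, ← Finset.sum_sub_distrib]
  have h3 : ∀ k : Fin N,
      ((∑ j : Fin N, Lop N k cR (Lop N j cL f) v)
        - ∑ j : Fin N, Lop N j cL (Lop N k cR f) v)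
      = (dC (v k) : ℂ) * f v := by
    intro k
    rw [← Finset.sum_sub_distrib]
    rw [Finset.sum_eq_single k]
    · exact Lop_same_comm k f v
    · intro j _ hjk
      rw [Lop_comm (Ne.symm hjk) cR cL f]
      ring
    · intro h
      exact absurd (Finset.mem_univ k) h
  rw [Finset.sum_congr rfl fun k _ => h3 k, cC, Finset.sum_mul]

lemma dC_step : ∀ x a : ZMod 4, (a = x + 1 ∨ a = x - 1) → lev4 a < lev4 x →
    dC a = dC x + 2 := by decide

lemma cC_adj {N : ℕ} {v w : Fin N → ZMod 4} (h : adj N 4 v w)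
    (hd : distO N 4 w < distO N 4 v) : cC w = cC v + 2 := by
  obtain ⟨k, hk⟩ := (adj_iff v w).mp h
  have main : ∀ a : ZMod 4, (a = v k + 1 ∨ a = v k - 1) →
      w = Function.update v k a → cC w = cC v + 2 := by
    intro a ha hw
    subst hw
    have hlev : lev4 a < lev4 (v k) := (distO_update_lt v k a).mp hd
    have hsum := sum_update_coord (M := ℂ) (fun x => (dC x : ℂ)) v k a
    have hstep : (dC a : ℂ) = (dC (v k) : ℂ) + 2 := by
      exact_mod_cast congrArg (fun z : ℤ => (z : ℂ)) (dC_step (v k) a ha hlev)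
    unfold cC
    linear_combination hsum + hstep
  rcases hk with h' | h'
  · exact main (v k + 1) (Or.inl rfl) h'
  · exact main (v k - 1) (Or.inr rfl) h'

open Classical in
lemma Dop_Aplus {N : ℕ} (f : (Fin N → ZMod 4) → ℂ) :
    Dop (Aplus N 4 f) = fun v => Aplus N 4 (Dop f) v - 2 * Aplus N 4 f v := by
  funext v
  simp only [Dop, Aplus]
  rw [Finset.mul_sum, Finset.mul_sum, ← Finset.sum_sub_distrib]
  refine Finset.sum_congr rfl fun w _ => ?_
  split_ifs with h
  · rw [cC_adj h.1 h.2]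
    ring
  · ring



lemma dC_expand : ∀ x : ZMod 4,
    dC x = 2 - 2 * (if lev4 x = 1 then 1 else 0) - 4 * (if lev4 x = 2 then 1 else 0 : ℤ) := by
  decide

lemma sum_boole_lev {N : ℕ} (v : Fin N → ZMod 4) (ℓ : ℕ) :
    (∑ k : Fin N, (if lev4 (v k) = ℓ then (1 : ℂ) else 0)) = (cardLev N 4 v ℓ : ℂ) := by
  rw [Finset.sum_boole]
  norm_num [cardLev, lev_eq]
  congr

lemma cC_sigma {N p q : ℕ} {v : Fin N → ZMod 4}
    (h1 : cardLev N 4 v 1 = p) (h2 : cardLev N 4 v 2 = q) :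
    cC v = 2 * N - 2 * p - 4 * q := by
  unfold cC
  have hterm : ∀ k : Fin N, (dC (v k) : ℂ)
      = 2 - 2 * (if lev4 (v k) = 1 then 1 else 0) - 4 * (if lev4 (v k) = 2 then 1 else 0) := by
    intro k
    have := dC_expand (v k)
    push_cast [this]
    split_ifs <;> norm_num
  rw [Finset.sum_congr rfl fun k _ => hterm k]
  rw [Finset.sum_sub_distrib, Finset.sum_sub_distrib, ← Finset.mul_sum, ← Finset.mul_sum,
    sum_boole_lev, sum_boole_lev, h1, h2]
  simp [Finset.card_univ, mul_comm]


lemma Dop_W {N p q : ℕ} {f : (Fin N → ZMod 4) → ℂ} (hf : f ∈ Wpq N p q) :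
    Dop f = ((2 * N - 2 * p - 4 * q : ℂ)) • f := by
  funext v
  by_cases h : cardLev N 4 v 1 = p ∧ cardLev N 4 v 2 = q
  · rw [Dop]
    rw [cC_sigma h.1 h.2]
    simp
  · have h0 : f v = 0 := hf.1 v h
    simp [Dop, h0]

open Classical in
lemma Aplus_smul {N : ℕ} (a : ℂ) (f : (Fin N → ZMod 4) → ℂ) :
    Aplus N 4 (a • f) = a • Aplus N 4 f := by
  funext v
  simp only [Aplus, Pi.smul_apply, smul_eq_mul, Finset.mul_sum]
  refine Finset.sum_congr rfl fun w _ => ?_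
  split_ifs <;> simp

open Classical in
lemma Aplus_zero {N : ℕ} : Aplus N 4 (0 : (Fin N → ZMod 4) → ℂ) = 0 := by
  funext v
  simp [Aplus]

lemma comm_fun {N : ℕ} (f : (Fin N → ZMod 4) → ℂ) :
    Aminus N 4 (Aplus N 4 f) = fun v => Aplus N 4 (Aminus N 4 f) v + Dop f v := by
  funext v
  have := comm_AmAp f v
  rw [Dop]
  linear_combination this


lemma Dop_iter {N : ℕ} {f : (Fin N → ZMod 4) → ℂ} {c0 : ℂ} (hD : Dop f = c0 • f) :
    ∀ j : ℕ, Dop ((Aplus N 4)^[j] f) = (c0 - 2 * j) • (Aplus N 4)^[j] f := by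
  intro j
  induction j with
  | zero => simpa using hD
  | succ j ih =>
    rw [Function.iterate_succ_apply', Dop_Aplus]
    funext v
    rw [ih, Aplus_smul]
    simp only [Pi.smul_apply, smul_eq_mul, Pi.sub_apply]
    push_cast
    ring

lemma Aminus_iter {N p q : ℕ} {f : (Fin N → ZMod 4) → ℂ} (hf : f ∈ Wpq N p q) :
    ∀ k : ℕ, ∃ μ : ℂ, Aminus N 4 ((Aplus N 4)^[k + 1] f) = μ • (Aplus N 4)^[k] f := by
  have hD : Dop f = ((2 * N - 2 * p - 4 * q : ℂ)) • f := Dop_W hf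
  intro k
  induction k with
  | zero =>
    refine ⟨(2 * N - 2 * p - 4 * q : ℂ), ?_⟩
    rw [Function.iterate_one, comm_fun, hf.2, Aplus_zero, Function.iterate_zero_apply, hD]
    funext v
    simp
  | succ k ih =>
    obtain ⟨μ, hμ⟩ := ih
    refine ⟨μ + ((2 * N - 2 * p - 4 * q : ℂ) - 2 * (k + 1)), ?_⟩
    rw [Function.iterate_succ_apply' (Aplus N 4) (k + 1), comm_fun, hμ, Aplus_smul,
        Dop_iter hD (k + 1)]
    funext v
    rw [Function.iterate_succ_apply' (Aplus N 4) k]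
    simp only [Pi.add_apply, Pi.smul_apply, smul_eq_mul]
    push_cast
    ring

open Classical in
lemma Aop_add {N : ℕ} (f g : (Fin N → ZMod 4) → ℂ) :
    Aop N 4 (f + g) = Aop N 4 f + Aop N 4 g := by
  funext v
  simp only [Aop, Pi.add_apply, ← Finset.sum_add_distrib]
  refine Finset.sum_congr rfl fun w _ => ?_
  split_ifs <;> simp

open Classical in
lemma Aop_smul {N : ℕ} (a : ℂ) (f : (Fin N → ZMod 4) → ℂ) :
    Aop N 4 (a • f) = a • Aop N 4 f := by
  funext v
  simp only [Aop, Pi.smul_apply, smul_eq_mul, Finset.mul_sum]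
  refine Finset.sum_congr rfl fun w _ => ?_
  split_ifs <;> simp

open Classical in
lemma Aop_zero {N : ℕ} : Aop N 4 (0 : (Fin N → ZMod 4) → ℂ) = 0 := by
  funext v
  simp [Aop]


theorem main_aux (N p q : ℕ) (hN : 1 ≤ N) :
    ∀ g ∈ Vpq N p q, Aop N 4 g ∈ Vpq N p q := by
  intro g hg
  refine Submodule.span_induction (p := fun x _ => Aop N 4 x ∈ Vpq N p q) ?_ ?_ ?_ ?_ hg
  · rintro x ⟨k, f, hfW, rfl⟩
    show Aop N 4 ((Aplus N 4)^[k] f) ∈ Vpq N p q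
    rw [Aop_split]
    have hsplit : (fun v => Aplus N 4 ((Aplus N 4)^[k] f) v + Aminus N 4 ((Aplus N 4)^[k] f) v)
        = Aplus N 4 ((Aplus N 4)^[k] f) + Aminus N 4 ((Aplus N 4)^[k] f) := rfl
    rw [hsplit]
    refine Submodule.add_mem _ ?_ ?_
    · apply Submodule.subset_span
      exact ⟨k + 1, f, hfW, by rw [Function.iterate_succ_apply']⟩
    · cases k with
      | zero =>
        rw [Function.iterate_zero_apply, hfW.2]
        exact Submodule.zero_mem _
      | succ j =>
        obtain ⟨μ, hμ⟩ := Aminus_iter hfW j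
        rw [hμ]
        exact Submodule.smul_mem _ _ (Submodule.subset_span ⟨j, f, hfW, rfl⟩)
  · show Aop N 4 0 ∈ Vpq N p q
    rw [Aop_zero]
    exact Submodule.zero_mem _
  · intro x y hx hy hax hay
    show Aop N 4 (x + y) ∈ Vpq N p q
    rw [Aop_add]
    exact Submodule.add_mem _ hax hay
  · intro a x hx hax
    show Aop N 4 (a • x) ∈ Vpq N p q
    rw [Aop_smul]
    exact Submodule.smul_mem _ _ hax

end C4aux
/-- `V_{p,q}` is invariant under the adjacency operator on `C_4^N`. -/
theorem adjacency_invariant_C4 (N p q : ℕ) (hN : 1 ≤ N) :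
    ∀ g ∈ Vpq N p q, Aop N 4 g ∈ Vpq N p q :=
  C4aux.main_aux N p q hN
end
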